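/- arXiv:1608.01969 — 5 statements merged into one kernel-verified Lean document; each statement's English description precedes it below -/
import Mathlib

section
/- Let α be a Pisot–Vijayaraghavan number and let ξ be a real number with ξ ∉ ℚ(α). Then the sequence ({ξαⁿ})_{n∈ℕ} of fractional parts has infinitely many limit points. -/
open Filter Polynomial Finset Topology

section Aux

private lemma pigeon {X : Type*} {T : Set X} (hT : T.Finite) (f : ℕ → X)
    (hf : ∀ n, f n ∈ T) : ∃ a b : ℕ, a < b ∧ f a = f b := by
  haveI := hT.to_subtype
  obtain ⟨a, b, hab, h⟩ := Finite.exists_ne_map_eq_of_infinite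
    (fun n : ℕ => (⟨f n, hf n⟩ : T))
  have h' : f a = f b := congrArg Subtype.val h
  rcases hab.lt_or_gt with h1 | h1
  · exact ⟨a, b, h1, h'⟩
  · exact ⟨b, a, h1, h'.symm⟩

private lemma evper {Y : Type*} (c : ℕ → Y) {T : Set Y} (hT : T.Finite) (hc : ∀ n, c n ∈ T)
    {d n₁ : ℕ} (Φ : (Fin d → Y) → Y)
    (hrel : ∀ n, n₁ ≤ n → c (n + d) = Φ (fun i => c (n + i))) :
    ∃ p, 0 < p ∧ ∃ n₂, ∀ n, n₂ ≤ n → c (n + p) = c n := by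
  have hfin : (Set.univ.pi fun _ : Fin d => T).Finite := Set.Finite.pi (fun _ => hT)
  obtain ⟨a, b, hab, heq⟩ := pigeon hfin (fun k => fun i : Fin d => c (n₁ + k + i))
    (fun n => by intro i _; exact hc _)
  refine ⟨b - a, by omega, n₁ + a, ?_⟩
  intro m hm
  induction m using Nat.strong_induction_on with
  | _ m IH =>
    by_cases hcase : m < n₁ + a + d
    · have hi : m - (n₁ + a) < d := by omega
      have h2 := congrFun heq ⟨m - (n₁ + a), hi⟩
      simp only [] at h2
      have e1 : n₁ + a + ((⟨m - (n₁ + a), hi⟩ : Fin d) : ℕ) = m := by simp; omega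
      have e2 : n₁ + b + ((⟨m - (n₁ + a), hi⟩ : Fin d) : ℕ) = m + (b - a) := by simp; omega
      rw [e1, e2] at h2
      exact h2.symm
    · have hm' : n₁ + a + d ≤ m := by omega
      have hrw : m = (m - d) + d := by omega
      set n := m - d with hn
      have h1 : c (n + (b - a) + d) = Φ (fun i => c (n + (b - a) + i)) := hrel _ (by omega)
      have h2 : c (n + d) = Φ (fun i => c (n + i)) := hrel _ (by omega)
      have h3 : (fun i : Fin d => c (n + (b - a) + i)) = fun i : Fin d => c (n + i) := by
        funext i
        have hi : (i : ℕ) < d := i.isLt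
        have e1 : n + (b - a) + (i : ℕ) = (n + i) + (b - a) := by omega
        rw [e1]
        exact IH (n + i) (by omega) (by omega)
      have e2 : m + (b - a) = n + (b - a) + d := by omega
      rw [e2, h1, h3, ← h2, ← hrw]

private lemma tsum_periodic {g : ℕ → ℝ} (hs : Summable g) {p : ℕ} {q : ℝ}
    (hper : ∀ j, g (j + p) = g j * q) : (1 - q) * ∑' j, g j = ∑ j ∈ Finset.range p, g j := by
  have h1 := Summable.sum_add_tsum_nat_add p hs
  have h2 : ∑' j, g (j + p) = (∑' j, g j) * q := by
    rw [tsum_congr hper, tsum_mul_right]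
  rw [h2] at h1
  linarith

private lemma summable_aux {v : ℕ → ℝ} {C x : ℝ} (hx0 : 0 ≤ x) (hx : x < 1)
    (hv : ∀ j, |v j| ≤ C) : Summable (fun j => v j * x ^ j) := by
  apply Summable.of_norm
  refine Summable.of_nonneg_of_le (fun j => norm_nonneg _) (fun j => ?_)
    (((summable_geometric_of_lt_one hx0 hx)).mul_left C)
  rw [norm_mul, Real.norm_eq_abs, Real.norm_eq_abs, abs_pow, abs_of_nonneg hx0]
  exact mul_le_mul_of_nonneg_right (hv j) (pow_nonneg hx0 j)

private lemma zsmul_dist {Y : Type*} [SeminormedAddCommGroup Y] (n : ℤ) (u v : Y) :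
    dist (n • u) (n • v) ≤ (n.natAbs : ℝ) * dist u v := by
  rw [dist_eq_norm, ← smul_sub, dist_eq_norm]
  rcases Int.natAbs_eq n with h | h
  · rw [h, natCast_zsmul]
    exact norm_nsmul_le (n := n.natAbs) (a := u - v)
  · rw [h, neg_zsmul, norm_neg, natCast_zsmul]
    have := norm_nsmul_le (n := n.natAbs) (a := u - v)
    rw [Int.natAbs_neg, Int.natAbs_natCast]
    exact this

private lemma norm_circle_eq {t : ℝ} (h : |t| ≤ 1 / 2) : ‖(t : AddCircle (1 : ℝ))‖ = |t| := by
  rw [AddCircle.norm_eq]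
  simp only [inv_one, one_mul, mul_one]
  rcases eq_or_lt_of_le (abs_le.1 h).2 with h2 | h2
  · rw [h2]
    have : round (1 / 2 : ℝ) = 1 := by norm_num [round_eq]
    rw [this]
    norm_num
  · have : round t = 0 := by
      rw [round_eq, Int.floor_eq_zero_iff]
      constructor
      · have := (abs_le.1 h).1; simp; linarith
      · simp; linarith
    simp [this]

end Aux

/-- A Pisot–Vijayaraghavan number: a real algebraic integer greater than 1 all of
whose other conjugates lie in the open unit disc. -/
def IsPisot (α : ℝ) : Prop :=
  1 < α ∧ IsIntegral ℤ α ∧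
    ∀ z : ℂ, (Polynomial.aeval z) (minpoly ℤ α) = 0 → z ≠ (α : ℂ) → ‖z‖ < 1

set_option maxHeartbeats 3000000 in
theorem stmt_5 (α ξ : ℝ) (hα : IsPisot α)
    (hξ : ξ ∉ IntermediateField.adjoin ℚ ({α} : Set ℝ)) :
    {x : ℝ | MapClusterPt x Filter.atTop (fun n : ℕ => Int.fract (ξ * α ^ n))}.Infinite := by
  classical
  obtain ⟨hα1, hint, -⟩ := hα
  by_contra hinf
  rw [Set.not_infinite] at hinf
  apply hξ
  haveI : Fact ((0:ℝ) < 1) := ⟨one_pos⟩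
  have hα0 : (0:ℝ) < α := lt_trans one_pos hα1
  -- the minimal polynomial and the integer recurrence coefficients
  set P : Polynomial ℤ := minpoly ℤ α with hPdef
  set d : ℕ := P.natDegree with hddef
  have hd0 : 0 < d := minpoly.natDegree_pos hint
  set b : ℕ → ℤ := fun i => - P.coeff i with hbdef
  have hrec : α ^ d = ∑ i ∈ Finset.range d, (b i : ℝ) * α ^ i := by
    have h0 : (Polynomial.aeval α) P = 0 := minpoly.aeval ℤ α
    rw [Polynomial.aeval_eq_sum_range, Finset.sum_range_succ] at h0
    have hm : P.coeff d = 1 := (minpoly.monic hint).coeff_natDegree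
    rw [hm] at h0
    simp only [zsmul_eq_mul] at h0
    have : ∑ i ∈ Finset.range d, (b i : ℝ) * α ^ i
        = - ∑ i ∈ Finset.range d, (P.coeff i : ℝ) * α ^ i := by
      rw [← Finset.sum_neg_distrib]
      refine Finset.sum_congr rfl fun i _ => ?_
      simp [hbdef]
    rw [this]
    push_cast at h0 ⊢
    linarith
  -- the recurrence for ξ * α ^ n
  have hxrec : ∀ n : ℕ, ξ * α ^ (n + d) = ∑ i ∈ Finset.range d, (b i : ℝ) * (ξ * α ^ (n + i)) := by
    intro n
    have : ξ * α ^ (n + d) = (ξ * α ^ n) * α ^ d := by rw [pow_add]; ring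
    rw [this, hrec, Finset.mul_sum]
    refine Finset.sum_congr rfl fun i _ => ?_
    rw [pow_add]; ring
  -- work on the circle
  set πh : ℝ →+ AddCircle (1:ℝ) := QuotientAddGroup.mk' _ with hπh
  have hπint : ∀ k : ℤ, πh ((k : ℝ)) = 0 := by
    intro k
    have : ((k : ℝ) : AddCircle (1:ℝ)) = 0 := by
      rw [AddCircle.coe_eq_zero_iff]
      exact ⟨k, by simp⟩
    exact this
  have hπcont : Continuous πh := AddCircle.continuous_mk' 1
  set u : ℕ → ℝ := fun n => Int.fract (ξ * α ^ n) with hudef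
  set y : ℕ → AddCircle (1:ℝ) := fun n => πh (ξ * α ^ n) with hydef
  have hyu : ∀ n, y n = πh (u n) := by
    intro n
    rw [hydef, hudef]
    simp only []
    rw [← sub_eq_zero, ← map_sub]
    have : ξ * α ^ n - Int.fract (ξ * α ^ n) = ((⌊ξ * α ^ n⌋ : ℤ) : ℝ) := by
      rw [Int.self_sub_fract]
    rw [this]
    exact hπint _
  set C : Set (AddCircle (1:ℝ)) := {z | MapClusterPt z atTop y} with hCdef
  -- C is finite
  have hCfin : C.Finite := by
    apply Set.Finite.subset (hinf.image (fun r : ℝ => πh r))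
    intro z hz
    obtain ⟨φ, hφ, hφt⟩ := TopologicalSpace.FirstCountableTopology.tendsto_subseq hz
    have hubdd : ∀ n, u (φ n) ∈ Set.Icc (0:ℝ) 1 := by
      intro n
      exact ⟨Int.fract_nonneg _, le_of_lt (Int.fract_lt_one _)⟩
    obtain ⟨c0, -, ψ, hψ, hψt⟩ := tendsto_subseq_of_bounded (Metric.isBounded_Icc (0:ℝ) 1) hubdd
    have hc0 : MapClusterPt c0 atTop u := by
      apply MapClusterPt.of_comp (Filter.tendsto_atTop_mono (fun n => le_refl _) ((hφ.comp hψ).tendsto_atTop))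
      exact hψt.mapClusterPt
    refine ⟨c0, hc0, ?_⟩
    have h1 : Tendsto (fun k => πh (u (φ (ψ k)))) atTop (𝓝 (πh c0)) :=
      (hπcont.tendsto c0).comp hψt
    have h2 : Tendsto (fun k => y (φ (ψ k))) atTop (𝓝 z) := hφt.comp hψ.tendsto_atTop
    have h3 : (fun k => y (φ (ψ k))) = fun k => πh (u (φ (ψ k))) := by
      funext k; exact hyu _
    rw [h3] at h2
    exact tendsto_nhds_unique h1 h2
  -- C is nonempty
  have hCne : C.Nonempty := by
    obtain ⟨z, φ, hφ, hφt⟩ := CompactSpace.tendsto_subseq y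
    exact ⟨z, MapClusterPt.of_comp hφ.tendsto_atTop hφt.mapClusterPt⟩
  -- nearest point projection onto C
  have hmin : ∀ n : ℕ, ∃ z ∈ hCfin.toFinset, ∀ z' ∈ hCfin.toFinset,
      dist (y n) z ≤ dist (y n) z' := by
    intro n
    exact Finset.exists_min_image hCfin.toFinset (fun z => dist (y n) z)
      (by rwa [Set.Finite.toFinset_nonempty])
  choose c hcmem hcnear using hmin
  have hcC : ∀ n, c n ∈ C := fun n => (Set.Finite.mem_toFinset hCfin).1 (hcmem n)
  -- dist (y n) (c n) → 0
  have hdist0 : Tendsto (fun n => dist (y n) (c n)) atTop (𝓝 0) := by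
    have hev : ∀ ε > (0:ℝ), ∀ᶠ n in atTop, dist (y n) (c n) < ε := by
      intro ε hε
      by_contra hcon
      rw [Filter.not_eventually] at hcon
      have hyD : ∃ᶠ n in atTop, ∀ z ∈ C, ε ≤ dist (y n) z := by
        refine hcon.mono fun n hn z hz => ?_
        have h1 : ε ≤ dist (y n) (c n) := not_lt.1 hn
        exact le_trans h1 (hcnear n z ((Set.Finite.mem_toFinset hCfin).2 hz))
      set F := atTop ⊓ 𝓟 {n | ∀ z ∈ C, ε ≤ dist (y n) z} with hF
      haveI hFne : F.NeBot := by
        rw [hF, inf_principal_neBot_iff]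
        intro U hU
        obtain ⟨n, hnU, hnp⟩ := Filter.frequently_iff.1 hyD hU
        exact ⟨n, hnU, hnp⟩
      obtain ⟨z₀, hz₀⟩ := exists_clusterPt_of_compactSpace (map y F)
      have hz₀C : z₀ ∈ C := by
        have : ClusterPt z₀ (map y atTop) := hz₀.mono (map_mono inf_le_left)
        exact this
      have hz₀D : ∀ z ∈ C, ε ≤ dist z₀ z := by
        set D : Set (AddCircle (1:ℝ)) := {w | ∀ z ∈ C, ε ≤ dist w z} with hD
        have hclosed : IsClosed D := by
          have : D = ⋂ z ∈ C, {w | ε ≤ dist w z} := by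
            ext w; simp [hD]
          rw [this]
          exact isClosed_biInter fun z _ =>
            isClosed_le continuous_const (continuous_id.dist continuous_const)
        have hle : map y F ≤ 𝓟 D := by
          rw [le_principal_iff, Filter.mem_map]
          exact mem_inf_of_right (mem_principal_self _)
        have : ClusterPt z₀ (𝓟 D) := hz₀.mono hle
        have hmem : z₀ ∈ closure D := mem_closure_iff_clusterPt.2 this
        rwa [hclosed.closure_eq] at hmem
      have := hz₀D z₀ hz₀C
      simp at this
      linarith
    rw [NormedAddCommGroup.tendsto_nhds_zero]
    intro ε hε
    refine (hev ε hε).mono fun n hn => ?_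
    rwa [Real.norm_eq_abs, abs_of_nonneg dist_nonneg]
  -- recurrence on the circle
  have hyrec : ∀ n : ℕ, y (n + d) = ∑ i ∈ Finset.range d, b i • y (n + i) := by
    intro n
    rw [hydef]
    simp only []
    rw [hxrec n, map_sum]
    refine Finset.sum_congr rfl fun i _ => ?_
    rw [← zsmul_eq_mul, map_zsmul]
  -- finite set of possible "gaps"
  set Bsum : ℝ := ∑ i ∈ Finset.range d, ((b i).natAbs : ℝ) with hBsum
  have hBsum0 : 0 ≤ Bsum := Finset.sum_nonneg fun i _ => by positivity
  set Δ : Set ℝ := (fun q : AddCircle (1:ℝ) × (Fin d → AddCircle (1:ℝ)) =>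
      dist q.1 (∑ i : Fin d, b i • q.2 i)) '' (C ×ˢ (Set.univ.pi fun _ : Fin d => C)) with hΔ
  have hΔfin : Δ.Finite := ((hCfin.prod (Set.Finite.pi fun _ => hCfin)).image _)
  have hgapex : ∃ g > (0:ℝ), ∀ t ∈ Δ, t < g → t ≤ 0 := by
    by_cases hne : (Δ ∩ Set.Ioi (0:ℝ)).Nonempty
    · have hfinp : (Δ ∩ Set.Ioi (0:ℝ)).Finite := hΔfin.inter_of_left _
      have hsne : hfinp.toFinset.Nonempty := by rwa [Set.Finite.toFinset_nonempty]
      refine ⟨hfinp.toFinset.min' hsne, ?_, ?_⟩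
      · have := hfinp.toFinset.min'_mem hsne
        rw [Set.Finite.mem_toFinset] at this
        exact this.2
      · intro t ht hlt
        by_contra hpos
        push_neg at hpos
        have hts : t ∈ hfinp.toFinset := by
          rw [Set.Finite.mem_toFinset]; exact ⟨ht, hpos⟩
        exact absurd (hfinp.toFinset.min'_le t hts) (not_le.2 hlt)
    · refine ⟨1, one_pos, fun t ht hlt => ?_⟩
      by_contra hpos
      push_neg at hpos
      exact hne ⟨t, ht, hpos⟩
  obtain ⟨g, hg0, hgap⟩ := hgapex
  -- eventually the nearest points satisfy the recurrence exactly
  have hccrel : ∃ n₁, ∀ n, n₁ ≤ n → c (n + d) = ∑ i ∈ Finset.range d, b i • c (n + i) := by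
    have hδ : (0:ℝ) < g / (1 + Bsum) := div_pos hg0 (by linarith)
    obtain ⟨n₁, hn₁⟩ := eventually_atTop.1 (hdist0.eventually (gt_mem_nhds hδ))
    refine ⟨n₁, fun n hn => ?_⟩
    have hkey : dist (c (n + d)) (∑ i ∈ Finset.range d, b i • c (n + i)) < g := by
      have h2 : dist (y (n + d)) (∑ i ∈ Finset.range d, b i • c (n + i))
          = dist (∑ i ∈ Finset.range d, b i • y (n + i))
              (∑ i ∈ Finset.range d, b i • c (n + i)) := by rw [hyrec n]
      have h3 : dist (∑ i ∈ Finset.range d, b i • y (n + i))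
            (∑ i ∈ Finset.range d, b i • c (n + i))
          ≤ ∑ i ∈ Finset.range d, ((b i).natAbs : ℝ) * dist (y (n + i)) (c (n + i)) :=
        le_trans (dist_sum_sum_le _ _ _) (Finset.sum_le_sum fun i _ => zsmul_dist _ _ _)
      have h4 : ∑ i ∈ Finset.range d, ((b i).natAbs : ℝ) * dist (y (n + i)) (c (n + i))
          ≤ Bsum * (g / (1 + Bsum)) := by
        rw [hBsum, Finset.sum_mul]
        refine Finset.sum_le_sum fun i _ => ?_
        exact mul_le_mul_of_nonneg_left (le_of_lt (hn₁ _ (by omega))) (by positivity)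
      have h5 : dist (c (n + d)) (y (n + d)) < g / (1 + Bsum) := by
        rw [dist_comm]; exact hn₁ _ (by omega)
      have h6 : g / (1 + Bsum) + Bsum * (g / (1 + Bsum)) = g := by
        field_simp
      have h7 := dist_triangle (c (n + d)) (y (n + d))
        (∑ i ∈ Finset.range d, b i • c (n + i))
      rw [h2] at h7
      calc dist (c (n + d)) (∑ i ∈ Finset.range d, b i • c (n + i))
          ≤ dist (c (n + d)) (y (n + d)) + ∑ i ∈ Finset.range d,
              ((b i).natAbs : ℝ) * dist (y (n + i)) (c (n + i)) := le_trans h7 (by linarith)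
        _ < g := by linarith
    have hmemΔ : dist (c (n + d)) (∑ i ∈ Finset.range d, b i • c (n + i)) ∈ Δ := by
      rw [hΔ]
      refine ⟨(c (n + d), fun i : Fin d => c (n + i)), ⟨hcC _, fun i _ => hcC _⟩, ?_⟩
      simp only []
      congr 1
      exact Fin.sum_univ_eq_sum_range (fun i => b i • c (n + i)) d
    have hle0 := hgap _ hmemΔ hkey
    have heq0 : dist (c (n + d)) (∑ i ∈ Finset.range d, b i • c (n + i)) = 0 :=
      le_antisymm hle0 dist_nonneg
    exact dist_eq_zero.1 heq0
  obtain ⟨n₁, hccrel⟩ := hccrel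
  -- the nearest-point sequence is eventually periodic
  obtain ⟨p, hp0, n₂, hcper⟩ := evper c hCfin hcC
    (fun v : Fin d → AddCircle (1:ℝ) => ∑ i : Fin d, b i • v i)
    (fun n hn => by
      rw [hccrel n hn]
      exact (Fin.sum_univ_eq_sum_range (fun i => b i • c (n + i)) d).symm)
  -- lift to the reals
  have hlift : ∀ z : AddCircle (1:ℝ), ∃ r : ℝ, r ∈ Set.Ico (0:ℝ) 1 ∧ (r : AddCircle (1:ℝ)) = z :=
    fun z => AddCircle.eq_coe_Ico z
  choose lf hlfmem hlfeq using hlift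
  set γ : ℕ → ℝ := fun n => lf (c n) with hγ
  have hπγ : ∀ n, πh (γ n) = c n := fun n => hlfeq (c n)
  have hγ0 : ∀ n, 0 ≤ γ n := fun n => (hlfmem (c n)).1
  have hγ1 : ∀ n, γ n < 1 := fun n => (hlfmem (c n)).2
  -- integer parts and errors
  set m : ℕ → ℤ := fun n => round (ξ * α ^ n - γ n) with hmdef
  set E : ℕ → ℝ := fun n => ξ * α ^ n - m n - γ n with hEdef
  have hdecomp : ∀ n, ξ * α ^ n = (m n : ℝ) + γ n + E n := fun n => by rw [hEdef]; ring
  have hE2 : ∀ n, |E n| ≤ 1 / 2 := by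
    intro n
    have h : E n = (ξ * α ^ n - γ n) - round (ξ * α ^ n - γ n) := by rw [hEdef]; push_cast; ring
    rw [h]
    exact abs_sub_round _
  have hπE : ∀ n, πh (E n) = y n - c n := by
    intro n
    rw [hEdef]
    simp only []
    rw [map_sub, map_sub, hπint (m n), hπγ n]
    rw [sub_zero]
  have hE0 : Tendsto E atTop (𝓝 0) := by
    apply squeeze_zero_norm (fun n => ?_) hdist0
    have h1 : ‖(E n : AddCircle (1:ℝ))‖ = |E n| := norm_circle_eq (hE2 n)
    have h2 : (E n : AddCircle (1:ℝ)) = y n - c n := hπE n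
    rw [Real.norm_eq_abs, ← h1, h2, ← dist_eq_norm]
  -- the integer sequence σ
  set σ : ℕ → ℤ := fun n => (∑ i ∈ Finset.range d, b i * m (n + i)) - m (n + d) with hσdef
  set w : ℕ → ℝ := fun n => γ n + E n with hwdef
  have hwdecomp : ∀ n, (m n : ℝ) = ξ * α ^ n - w n := by
    intro n; rw [hwdef]; have := hdecomp n; simp only []; linarith
  have hσreal : ∀ n, (σ n : ℝ) = w (n + d) - ∑ i ∈ Finset.range d, (b i : ℝ) * w (n + i) := by
    intro n
    rw [hσdef]
    push_cast
    have h1 : ∑ i ∈ Finset.range d, (b i : ℝ) * (m (n + i) : ℝ)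
        = ∑ i ∈ Finset.range d, (b i : ℝ) * (ξ * α ^ (n + i))
          - ∑ i ∈ Finset.range d, (b i : ℝ) * w (n + i) := by
      rw [← Finset.sum_sub_distrib]
      refine Finset.sum_congr rfl fun i _ => ?_
      rw [hwdecomp (n + i)]; ring
    rw [h1, hwdecomp (n + d), ← hxrec n]
    ring
  set t : ℕ → ℝ := fun n => γ (n + d) - ∑ i ∈ Finset.range d, (b i : ℝ) * γ (n + i) with htdef
  set η : ℕ → ℝ := fun n => E (n + d) - ∑ i ∈ Finset.range d, (b i : ℝ) * E (n + i) with hηdef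
  have hση : ∀ n, (σ n : ℝ) = t n + η n := by
    intro n
    rw [hσreal n, htdef, hηdef]
    simp only []
    have h1 : ∑ i ∈ Finset.range d, (b i : ℝ) * w (n + i)
        = ∑ i ∈ Finset.range d, (b i : ℝ) * γ (n + i)
          + ∑ i ∈ Finset.range d, (b i : ℝ) * E (n + i) := by
      rw [← Finset.sum_add_distrib]
      refine Finset.sum_congr rfl fun i _ => ?_
      rw [hwdef]; simp only []; ring
    rw [h1, hwdef]
    simp only []
    ring
  have hη0 : Tendsto η atTop (𝓝 0) := by
    have hshift : ∀ k : ℕ, Tendsto (fun n => E (n + k)) atTop (𝓝 0) :=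
      fun k => hE0.comp (tendsto_add_atTop_nat k)
    have h1 : Tendsto (fun n => ∑ i ∈ Finset.range d, (b i : ℝ) * E (n + i)) atTop
        (𝓝 (∑ i ∈ Finset.range d, (0:ℝ))) := by
      apply tendsto_finset_sum
      intro i _
      simpa using (hshift i).const_mul ((b i : ℝ))
    simp only [Finset.sum_const_zero] at h1
    have h2 := (hshift d).sub h1
    rw [sub_zero] at h2
    exact h2
  -- σ is eventually periodic with period p
  have hσper : ∃ n₃, ∀ n, n₃ ≤ n → σ (n + p) = σ n := by
    have hγper : ∀ k, n₂ ≤ k → γ (k + p) = γ k := by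
      intro k hk; rw [hγ]; simp only []; rw [hcper k hk]
    have htper : ∀ n, n₂ ≤ n → t (n + p) = t n := by
      intro n hn
      rw [htdef]
      simp only []
      rw [show n + p + d = (n + d) + p by ring, hγper (n + d) (by omega)]
      congr 1
      refine Finset.sum_congr rfl fun i _ => ?_
      rw [show n + p + i = (n + i) + p by ring, hγper (n + i) (by omega)]
    have hdiff : Tendsto (fun n => η (n + p) - η n) atTop (𝓝 0) := by
      have := (hη0.comp (tendsto_add_atTop_nat p)).sub hη0
      simpa using this
    obtain ⟨n₄, hn₄⟩ := eventually_atTop.1 (hdiff.eventually (Metric.ball_mem_nhds 0 one_pos))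
    refine ⟨max n₂ n₄, fun n hn => ?_⟩
    have h1 : ((σ (n + p) - σ n : ℤ) : ℝ) = η (n + p) - η n := by
      push_cast
      rw [hση (n + p), hση n, htper n (le_trans (le_max_left _ _) hn)]
      ring
    have h2 : |((σ (n + p) - σ n : ℤ) : ℝ)| < 1 := by
      rw [h1]
      have := hn₄ n (le_trans (le_max_right _ _) hn)
      rw [Real.dist_eq, sub_zero] at this
      exact this
    have h3 : σ (n + p) - σ n = 0 := by
      by_contra hne
      have hge : (1:ℤ) ≤ |σ (n + p) - σ n| := Int.one_le_abs (by omega)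
      have : (1:ℝ) ≤ |((σ (n + p) - σ n : ℤ) : ℝ)| := by
        rw [← Int.cast_abs]
        exact_mod_cast hge
      linarith
    omega
  obtain ⟨n₃, hσper⟩ := hσper
  clear_value σ t η w E m γ
  -- ==== the algebraic conclusion ====
  have hαK : α ∈ IntermediateField.adjoin ℚ ({α} : Set ℝ) :=
    IntermediateField.subset_adjoin ℚ {α} rfl
  set x : ℝ := α⁻¹ with hxdef
  have hxα : α * x = 1 := mul_inv_cancel₀ (ne_of_gt hα0)
  have hx0 : 0 ≤ x := le_of_lt (inv_pos.2 hα0)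
  have hx1 : x < 1 := by
    rw [hxdef]
    rw [inv_lt_one_iff₀]
    right; exact hα1
  have hxK : x ∈ IntermediateField.adjoin ℚ ({α} : Set ℝ) :=
    (IntermediateField.adjoin ℚ ({α} : Set ℝ)).inv_mem hαK
  have hwb : ∀ n, |w n| ≤ 2 := by
    intro n
    rw [hwdef]
    simp only []
    obtain ⟨h3a, h3b⟩ := abs_le.1 (hE2 n)
    have h4 := hγ0 n
    have h5 := hγ1 n
    rw [abs_le]
    constructor <;> linarith
  set f : ℕ → ℝ := fun j => w j * x ^ j with hfdef
  have hfsum : Summable f := summable_aux hx0 hx1 hwb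
  have hax1 : ∀ j : ℕ, α ^ j * x ^ j = 1 := by
    intro j; rw [← mul_pow, hxα, one_pow]
  set M : ℕ → ℝ := fun k => ∑ j ∈ Finset.range k, (m j : ℝ) * x ^ j with hMdef
  have hSk : ∀ k, ∑ j ∈ Finset.range k, f j = k * ξ - M k := by
    intro k
    have h1 : ∀ j, f j = ξ - (m j : ℝ) * x ^ j := by
      intro j
      rw [hfdef]
      simp only []
      have h2 : w j = ξ * α ^ j - (m j : ℝ) := by have := hwdecomp j; linarith
      rw [h2, sub_mul, mul_assoc, hax1 j, mul_one]
    rw [Finset.sum_congr rfl fun j _ => h1 j, Finset.sum_sub_distrib, hMdef]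
    simp [Finset.sum_const, Finset.card_range]
  have hfshift : ∀ k, Summable (fun j => f (j + k)) := fun k => (summable_nat_add_iff k).2 hfsum
  have htail : ∀ k, ∑' j, f (j + k) = (∑' j, f j) - ∑ j ∈ Finset.range k, f j := by
    intro k; have := Summable.sum_add_tsum_nat_add k hfsum; linarith
  set F2 : ℕ → ℝ := fun j => (σ j : ℝ) * x ^ (j + d) with hF2def
  have hptwise : ∀ j, F2 j
      = f (j + d) - ∑ i ∈ Finset.range d, ((b i : ℝ) * x ^ (d - i)) * f (j + i) := by
    intro j
    rw [hF2def]
    simp only []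
    rw [hσreal j, sub_mul, Finset.sum_mul]
    congr 1
    refine Finset.sum_congr rfl fun i hi => ?_
    have hid : i < d := Finset.mem_range.1 hi
    have hxsplit : x ^ (j + d) = x ^ (d - i) * x ^ (j + i) := by
      rw [← pow_add]; congr 1; omega
    rw [hxsplit, hfdef]
    simp only []
    ring
  have hrhs_sum : Summable (fun j => f (j + d)
      - ∑ i ∈ Finset.range d, ((b i : ℝ) * x ^ (d - i)) * f (j + i)) := by
    apply Summable.sub (hfshift d)
    apply summable_sum
    intro i _
    exact (hfshift i).mul_left _
  have hF2sum : Summable F2 := by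
    exact Summable.congr hrhs_sum (fun j => (hptwise j).symm)
  have hA : ∑' j, F2 j = ((∑' j, f j) - ∑ j ∈ Finset.range d, f j)
      - ∑ i ∈ Finset.range d, ((b i : ℝ) * x ^ (d - i))
          * ((∑' j, f j) - ∑ j ∈ Finset.range i, f j) := by
    rw [tsum_congr hptwise,
      Summable.tsum_sub (hfshift d) (summable_sum fun i _ => (hfshift i).mul_left _), htail d]
    congr 1
    rw [Summable.tsum_finsetSum (fun i _ => (hfshift i).mul_left _)]
    refine Finset.sum_congr rfl fun i _ => ?_
    rw [tsum_mul_left, htail i]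
  have h1 : ∑ i ∈ Finset.range d, (b i : ℝ) * x ^ (d - i) = 1 := by
    have hterm : ∀ i ∈ Finset.range d, (b i : ℝ) * x ^ (d - i)
        = x ^ d * ((b i : ℝ) * α ^ i) := by
      intro i hi
      have hid : i < d := Finset.mem_range.1 hi
      have hxd : x ^ d = x ^ (d - i) * x ^ i := by rw [← pow_add]; congr 1; omega
      calc (b i : ℝ) * x ^ (d - i)
          = (b i : ℝ) * x ^ (d - i) * (α ^ i * x ^ i) := by rw [hax1 i, mul_one]
        _ = x ^ d * ((b i : ℝ) * α ^ i) := by rw [hxd]; ring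
    rw [Finset.sum_congr rfl hterm, ← Finset.mul_sum, ← hrec, ← mul_pow]
    rw [mul_comm x α, hxα, one_pow]
  set κ : ℝ := (d : ℝ) - ∑ i ∈ Finset.range d, (i : ℝ) * ((b i : ℝ) * x ^ (d - i)) with hκdef
  have hsum1 : ∑ i ∈ Finset.range d, ((b i : ℝ) * x ^ (d - i))
        * ((∑' j, f j) - ∑ j ∈ Finset.range i, f j)
      = (∑' j, f j)
        - (ξ * (∑ i ∈ Finset.range d, (i : ℝ) * ((b i : ℝ) * x ^ (d - i)))
           - ∑ i ∈ Finset.range d, ((b i : ℝ) * x ^ (d - i)) * M i) := by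
    have hterm : ∀ i ∈ Finset.range d, ((b i : ℝ) * x ^ (d - i))
          * ((∑' j, f j) - ∑ j ∈ Finset.range i, f j)
        = ((b i : ℝ) * x ^ (d - i)) * (∑' j, f j)
          - (ξ * ((i : ℝ) * ((b i : ℝ) * x ^ (d - i)))
             - ((b i : ℝ) * x ^ (d - i)) * M i) := by
      intro i _
      rw [hSk i]
      ring
    rw [Finset.sum_congr rfl hterm, Finset.sum_sub_distrib, ← Finset.sum_mul, h1, one_mul,
      Finset.sum_sub_distrib, ← Finset.mul_sum]
  have hfinal : ξ * κ = M d - (∑ i ∈ Finset.range d, ((b i : ℝ) * x ^ (d - i)) * M i)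
      - ∑' j, F2 j := by
    have hSd := hSk d
    have hexp : ξ * κ = ξ * (d : ℝ)
        - ξ * (∑ i ∈ Finset.range d, (i : ℝ) * ((b i : ℝ) * x ^ (d - i))) := by
      rw [hκdef]; ring
    rw [hexp, hA, hsum1]
    rw [hSd]
    ring
  -- membership facts
  have hintK : ∀ z : ℤ, ((z : ℝ)) ∈ IntermediateField.adjoin ℚ ({α} : Set ℝ) := by
    intro z
    exact_mod_cast intCast_mem (IntermediateField.adjoin ℚ ({α} : Set ℝ)) z
  have hnatK : ∀ z : ℕ, ((z : ℝ)) ∈ IntermediateField.adjoin ℚ ({α} : Set ℝ) := by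
    intro z
    exact_mod_cast natCast_mem (IntermediateField.adjoin ℚ ({α} : Set ℝ)) z
  have hxpow : ∀ k : ℕ, x ^ k ∈ IntermediateField.adjoin ℚ ({α} : Set ℝ) :=
    fun k => pow_mem hxK k
  have hMK : ∀ k, M k ∈ IntermediateField.adjoin ℚ ({α} : Set ℝ) := by
    intro k
    rw [hMdef]
    exact sum_mem fun j _ => mul_mem (hintK (m j)) (hxpow j)
  have htailA := Summable.sum_add_tsum_nat_add n₃ hF2sum
  set g2 : ℕ → ℝ := fun j => F2 (j + n₃) with hg2def
  have hg2sum : Summable g2 := (summable_nat_add_iff n₃).2 hF2sum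
  have hg2per : ∀ j, g2 (j + p) = g2 j * x ^ p := by
    intro j
    rw [hg2def, hF2def]
    simp only []
    have e1 : σ (j + p + n₃) = σ (j + n₃) := by
      have h := hσper (j + n₃) (by omega)
      rw [show j + n₃ + p = j + p + n₃ by ring] at h
      exact h
    rw [e1]
    rw [show j + p + n₃ + d = (j + n₃ + d) + p by ring, pow_add]
    ring
  have hxp1 : 1 - x ^ p ≠ 0 := by
    have hlt : x ^ p < 1 := pow_lt_one₀ hx0 hx1 hp0.ne'
    linarith
  have hg2K : ∑' j, g2 j ∈ IntermediateField.adjoin ℚ ({α} : Set ℝ) := by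
    have hval := tsum_periodic hg2sum hg2per
    have heq : ∑' j, g2 j = (∑ j ∈ Finset.range p, g2 j) * (1 - x ^ p)⁻¹ := by
      field_simp
      linarith [hval]
    rw [heq]
    refine mul_mem (sum_mem fun j _ => ?_)
      ((IntermediateField.adjoin ℚ ({α} : Set ℝ)).inv_mem
        (sub_mem (one_mem _) (pow_mem hxK p)))
    rw [hg2def, hF2def]
    exact mul_mem (hintK _) (hxpow _)
  have hAK : ∑' j, F2 j ∈ IntermediateField.adjoin ℚ ({α} : Set ℝ) := by
    rw [← htailA]
    refine add_mem (sum_mem fun j _ => ?_) hg2K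
    rw [hF2def]
    exact mul_mem (hintK _) (hxpow _)
  have hκK : κ ∈ IntermediateField.adjoin ℚ ({α} : Set ℝ) := by
    rw [hκdef]
    exact sub_mem (hnatK d)
      (sum_mem fun i _ => mul_mem (hnatK i) (mul_mem (hintK _) (hxpow _)))
  -- κ ≠ 0
  have hκα : κ * α ^ d = (d : ℝ) * α ^ d
      - ∑ i ∈ Finset.range d, (i : ℝ) * (b i : ℝ) * α ^ i := by
    rw [hκdef, sub_mul, Finset.sum_mul]
    congr 1
    refine Finset.sum_congr rfl fun i hi => ?_
    have hid : i < d := Finset.mem_range.1 hi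
    have hxd : (α : ℝ) ^ d = α ^ (d - i) * α ^ i := by rw [← pow_add]; congr 1; omega
    calc (i : ℝ) * ((b i : ℝ) * x ^ (d - i)) * α ^ d
        = (i : ℝ) * (b i : ℝ) * α ^ i * (α ^ (d - i) * x ^ (d - i)) := by rw [hxd]; ring
      _ = (i : ℝ) * (b i : ℝ) * α ^ i := by rw [hax1 (d - i), mul_one]
  have hκ0 : κ ≠ 0 := by
    intro hzero
    have hintQ : IsIntegral ℚ α := hint.tower_top
    set Q : Polynomial ℚ := minpoly ℚ α with hQdef
    have hQP : Q = P.map (algebraMap ℤ ℚ) :=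
      minpoly.isIntegrallyClosed_eq_field_fractions ℚ ℝ hint
    have hQdeg : Q.natDegree = d := by
      rw [hQP]
      exact (minpoly.monic hint).natDegree_map _
    have hsep : Q.Separable := (minpoly.irreducible hintQ).separable
    obtain ⟨A1, B1, hAB⟩ := hsep
    have haevalQ : (Polynomial.aeval α) Q = 0 := minpoly.aeval ℚ α
    have hQ'ne : (Polynomial.aeval α) (Polynomial.derivative Q) ≠ 0 := by
      intro h0
      have hc := congrArg (Polynomial.aeval α) hAB
      rw [map_add, map_mul, map_mul, haevalQ, h0, mul_zero, mul_zero, add_zero, map_one] at hc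
      exact zero_ne_one hc
    have hQne0 : Q.natDegree ≠ 0 := by rw [hQdeg]; omega
    have hQ'deg : (Polynomial.derivative Q).natDegree < d := by
      have h := Polynomial.natDegree_derivative_lt hQne0
      rwa [hQdeg] at h
    have hev : (Polynomial.aeval α) (Polynomial.derivative Q)
        = ∑ i ∈ Finset.range d, (algebraMap ℚ ℝ) ((Polynomial.derivative Q).coeff i) * α ^ i := by
      rw [Polynomial.aeval_eq_sum_range' hQ'deg]
      refine Finset.sum_congr rfl fun i _ => ?_
      rw [Algebra.smul_def]
    have hQcoeff : ∀ i, Q.coeff i = ((P.coeff i : ℚ)) := by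
      intro i
      rw [hQP, Polynomial.coeff_map]
      rfl
    have hκform : α * (Polynomial.aeval α) (Polynomial.derivative Q)
        = (d : ℝ) * α ^ d - ∑ i ∈ Finset.range d, (i : ℝ) * (b i : ℝ) * α ^ i := by
      set G : ℕ → ℝ := fun j : ℕ => (j : ℝ) * ((algebraMap ℚ ℝ) (Q.coeff j)) * α ^ j with hG
      have hterm : ∀ i ∈ Finset.range d,
          α * ((algebraMap ℚ ℝ) ((Polynomial.derivative Q).coeff i) * α ^ i) = G (i + 1) := by
        intro i _
        rw [hG]
        simp only [Polynomial.coeff_derivative, map_mul, map_natCast]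
        push_cast
        ring
      rw [hev, Finset.mul_sum, Finset.sum_congr rfl hterm]
      have hrs := Finset.sum_range_succ' G d
      have hz : G 0 = 0 := by rw [hG]; simp
      have hGd : G d = (d : ℝ) * α ^ d := by
        have hQd : Q.coeff d = 1 := by
          have h := (minpoly.monic hintQ).coeff_natDegree
          rwa [hQdeg] at h
        rw [hG]
        simp [hQd]
      have hGi : ∀ i ∈ Finset.range d, G i = -((i : ℝ) * (b i : ℝ) * α ^ i) := by
        intro i _
        rw [hG]
        simp only []
        rw [hQcoeff i, map_intCast, hbdef]
        push_cast
        ring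
      have hsum : ∑ i ∈ Finset.range d, G (i + 1)
          = G d + ∑ i ∈ Finset.range d, G i - G 0 := by
        have h2 : ∑ i ∈ Finset.range (d + 1), G i = G d + ∑ i ∈ Finset.range d, G i := by
          rw [Finset.sum_range_succ]; ring
        linarith [hrs, h2]
      rw [hsum, hz, hGd, Finset.sum_congr rfl hGi, Finset.sum_neg_distrib]
      ring
    have hzero2 : (d : ℝ) * α ^ d - ∑ i ∈ Finset.range d, (i : ℝ) * (b i : ℝ) * α ^ i = 0 := by
      rw [← hκα, hzero, zero_mul]
    rw [hzero2] at hκform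
    rcases mul_eq_zero.1 hκform with h | h
    · exact absurd h (ne_of_gt hα0)
    · exact hQ'ne h
  -- conclude
  have hξval : ξ = (M d - (∑ i ∈ Finset.range d, ((b i : ℝ) * x ^ (d - i)) * M i)
      - ∑' j, F2 j) * κ⁻¹ := by
    rw [← hfinal, mul_assoc, mul_inv_cancel₀ hκ0, mul_one]
  rw [hξval]
  exact mul_mem (sub_mem (sub_mem (hMK d)
      (sum_mem fun i _ => mul_mem (mul_mem (hintK _) (hxpow _)) (hMK i))) hAK)
    ((IntermediateField.adjoin ℚ ({α} : Set ℝ)).inv_mem hκK)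
end

section
/- Let p, q be integers with p ≥ q ≥ 1 and define F by F_0 = 0, F_1 = 1, F_{n+2} = p·F_{n+1} + q·F_n. Let (A_n), (f_n), (g_n) be sequences of complex numbers satisfying the recursion A_{n+1} = f_n·A_n + g_{n−1}·A_{n−1} for all n ≥ 1, with |f_n| ≤ p and |g_n| ≤ q for all n. Then for all n and all r with 1 ≤ r ≤ n one has |A_{n+1}| ≤ F_{r+1}·|A_{n−r+1}| + q·F_r·|A_{n−r}|. -/
theorem stmt_8 (p q : ℤ) (hq : 1 ≤ q) (hpq : q ≤ p)
    (F : ℕ → ℤ) (hF0 : F 0 = 0) (hF1 : F 1 = 1)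
    (hFrec : ∀ n : ℕ, F (n + 2) = p * F (n + 1) + q * F n)
    (A f g : ℕ → ℂ)
    (hA : ∀ n : ℕ, 1 ≤ n → A (n + 1) = f n * A n + g (n - 1) * A (n - 1))
    (hf : ∀ n : ℕ, ‖f n‖ ≤ (p : ℝ))
    (hg : ∀ n : ℕ, ‖g n‖ ≤ (q : ℝ)) :
    ∀ n r : ℕ, 1 ≤ r → r ≤ n →
      ‖A (n + 1)‖ ≤
        (F (r + 1) : ℝ) * ‖A (n - r + 1)‖ +
          (q : ℝ) * (F r : ℝ) * ‖A (n - r)‖ := by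
  have hFpos : ∀ n, (0:ℤ) ≤ F n := by
    have h : ∀ n, 0 ≤ F n ∧ 0 ≤ F (n+1) := by
      intro n
      induction n with
      | zero => simp [hF0, hF1]
      | succ m ih =>
        refine ⟨ih.2, ?_⟩
        rw [hFrec]
        nlinarith [ih.1, ih.2]
    exact fun n => (h n).1
  have habs : ∀ m, 1 ≤ m → ‖A (m+1)‖ ≤
      (p:ℝ) * ‖A m‖ + (q:ℝ) * ‖A (m-1)‖ := by
    intro m hm
    rw [hA m hm]
    calc ‖f m * A m + g (m-1) * A (m-1)‖
        ≤ ‖f m * A m‖ + ‖g (m-1) * A (m-1)‖ :=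
          norm_add_le _ _
      _ = ‖f m‖ * ‖A m‖
            + ‖g (m-1)‖ * ‖A (m-1)‖ := by
          rw [norm_mul, norm_mul]
      _ ≤ (p:ℝ) * ‖A m‖ + (q:ℝ) * ‖A (m-1)‖ := by
          gcongr
          · exact hf m
          · exact hg (m-1)
  intro n r hr hrn
  induction r with
  | zero => omega
  | succ k ih =>
    rcases Nat.eq_zero_or_pos k with hk0 | hk1
    · subst hk0
      have e1 : n - 1 + 1 = n := by omega
      have hF2 : F 2 = p := by rw [hFrec 0, hF0, hF1]; ring
      rw [e1]
      have := habs n hrn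
      push_cast [hF2, hF1]
      linarith
    · have hkn : k ≤ n := by omega
      have ihh := ih hk1 hkn
      have hm : 1 ≤ n - k := by omega
      have hb := habs (n - k) hm
      have e1 : n - (k+1) + 1 = n - k := by omega
      have e2 : n - (k+1) = n - k - 1 := by omega
      have e3 : n - k + 1 - 1 = n - k := by omega
      rw [e1, e2]
      have hFrw : (F (k + 1 + 1) : ℝ) = (p:ℝ) * (F (k+1) : ℝ) + (q:ℝ) * (F k : ℝ) := by
        have := hFrec k
        push_cast [this]
        ring
      have h1 : (0:ℝ) ≤ (F (k+1) : ℝ) := by exact_mod_cast hFpos (k+1)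
      have h0 : (0:ℝ) ≤ (F k : ℝ) := by exact_mod_cast hFpos k
      have hq' : (0:ℝ) ≤ (q:ℝ) := by exact_mod_cast le_of_lt (lt_of_lt_of_le one_pos hq)
      have ha : (0:ℝ) ≤ ‖A (n - k)‖ := norm_nonneg _
      have hb' : (0:ℝ) ≤ ‖A (n - k - 1)‖ := norm_nonneg _
      have key : ‖A (n+1)‖ ≤
          (F (k+1) : ℝ) * ((p:ℝ) * ‖A (n-k)‖ + (q:ℝ) * ‖A (n-k-1)‖)
            + (q:ℝ) * (F k : ℝ) * ‖A (n-k)‖ := by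
        refine le_trans ihh ?_
        gcongr
      calc ‖A (n+1)‖ ≤ _ := key
        _ = ((p:ℝ) * (F (k+1) : ℝ) + (q:ℝ) * (F k : ℝ)) * ‖A (n-k)‖
              + (q:ℝ) * (F (k+1) : ℝ) * ‖A (n-k-1)‖ := by ring
        _ = (F (k+1+1) : ℝ) * ‖A (n-k)‖
              + (q:ℝ) * (F (k+1) : ℝ) * ‖A (n-k-1)‖ := by
            rw [hFrw]
end

section
/- Let p, q be integers with p ≥ q ≥ 1 and θ = (p + √(p² + 4q))/2. Let (A_n), (f_n), (g_n) be sequences of complex numbers satisfying A_{n+1} = f_n·A_n + g_{n−1}·A_{n−1} for all n ≥ 1, with |f_n| ≤ p and |g_n| ≤ q for all n. Suppose there exist δ' ∈ (0,1) and r ∈ ℕ such that for every sufficiently large n there is at least one j ∈ {n−r, …, n} with |f_j| ≤ p − δ'. Then |A_n|²/θ^{2n} → 0 as n → ∞. -/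
theorem stmt_10 (p q : ℤ) (hq : 1 ≤ q) (hpq : q ≤ p) (θ : ℝ)
    (hθ : θ = ((p : ℝ) + Real.sqrt ((p : ℝ) ^ 2 + 4 * (q : ℝ))) / 2)
    (A f g : ℕ → ℂ)
    (hA : ∀ n : ℕ, 1 ≤ n → A (n + 1) = f n * A n + g (n - 1) * A (n - 1))
    (hf : ∀ n : ℕ, ‖f n‖ ≤ (p : ℝ))
    (hg : ∀ n : ℕ, ‖g n‖ ≤ (q : ℝ))
    (hwin : ∃ δ' : ℝ, 0 < δ' ∧ δ' < 1 ∧ ∃ r : ℕ,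
      ∀ᶠ n : ℕ in Filter.atTop, ∃ j ∈ Finset.Icc (n - r) n,
        ‖f j‖ ≤ (p : ℝ) - δ') :
    Filter.Tendsto (fun n : ℕ => ‖A n‖ ^ 2 / θ ^ (2 * n))
      Filter.atTop (nhds 0) := by
  classical
  obtain ⟨δ, hδ0, hδ1, r, hwin⟩ := hwin
  have hq1 : (1:ℝ) ≤ (q:ℝ) := by exact_mod_cast hq
  have hp1 : (1:ℝ) ≤ (p:ℝ) := by exact_mod_cast hq.trans hpq
  have hx0 : (0:ℝ) ≤ (p:ℝ)^2 + 4*(q:ℝ) := by nlinarith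
  have hs2 : (Real.sqrt ((p:ℝ)^2 + 4*(q:ℝ)))^2 = (p:ℝ)^2 + 4*(q:ℝ) :=
    Real.sq_sqrt hx0
  have hsp : (p:ℝ) < Real.sqrt ((p:ℝ)^2 + 4*(q:ℝ)) := by
    nlinarith [Real.sqrt_nonneg ((p:ℝ)^2 + 4*(q:ℝ)), hs2]
  have hθp : (p:ℝ) < θ := by rw [hθ]; linarith
  have hθ1 : 1 < θ := lt_of_le_of_lt hp1 hθp
  have hθ0 : 0 < θ := by linarith
  have hθne : θ ≠ 0 := ne_of_gt hθ0
  have hθsq : θ^2 = (p:ℝ)*θ + q := by rw [hθ]; linear_combination hs2/4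
  set t : ℝ := θ⁻¹ with htdef
  have ht0 : 0 < t := inv_pos.mpr hθ0
  have ht1 : t < 1 := by
    rw [htdef]
    exact inv_lt_one_of_one_lt₀ hθ1
  have hpt : (p:ℝ)*t + (q:ℝ)*t^2 = 1 := by
    rw [htdef]
    field_simp
    nlinarith [hθsq, hθ0]
  set a : ℕ → ℝ := fun n => ‖A n‖ * t^n with hadef
  have ha0 : ∀ n, 0 ≤ a n := fun n => by
    simp only [hadef]; positivity
  set M : ℕ → ℝ := fun n => max (a (n+1)) (a n) with hMdef
  have hM0 : ∀ n, 0 ≤ M n := fun n => le_trans (ha0 n) (le_max_right _ _)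
  have hMa1 : ∀ n, a (n+1) ≤ M n := fun n => le_max_left _ _
  have hMa2 : ∀ n, a n ≤ M n := fun n => le_max_right _ _
  -- basic recursion bound
  have hAbd : ∀ m : ℕ, ‖A (m+2)‖ ≤
      ‖f (m+1)‖ * ‖A (m+1)‖ + ‖g m‖ * ‖A m‖ := by
    intro m
    have h := hA (m+1) (by omega)
    simp only [Nat.add_sub_cancel] at h
    rw [show m+1+1 = m+2 by rfl] at h
    rw [h]
    calc ‖f (m+1) * A (m+1) + g m * A m‖
        ≤ ‖f (m+1) * A (m+1)‖ + ‖g m * A m‖ := norm_add_le _ _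
      _ = _ := by rw [norm_mul, norm_mul]
  have step : ∀ (m : ℕ) (C : ℝ), ‖f (m+1)‖ ≤ C →
      a (m+2) ≤ C*t*(a (m+1)) + (q:ℝ)*t^2*(a m) := by
    intro m C hC
    have h1 := hAbd m
    have h2 : ‖A (m+2)‖ ≤ C * ‖A (m+1)‖ + q * ‖A m‖ := by
      have e1 := mul_le_mul_of_nonneg_right hC (norm_nonneg (A (m+1)))
      have e2 := mul_le_mul_of_nonneg_right (hg m) (norm_nonneg (A m))
      linarith
    calc a (m+2) = ‖A (m+2)‖ * t^(m+2) := rfl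
      _ ≤ (C*‖A (m+1)‖ + q*‖A m‖) * t^(m+2) :=
          mul_le_mul_of_nonneg_right h2 (by positivity)
      _ = C*t*(‖A (m+1)‖ * t^(m+1)) + q*t^2*(‖A m‖ * t^m) := by ring
      _ = C*t*(a (m+1)) + q*t^2*(a m) := rfl
  -- monotonicity of M
  have mono : ∀ n, M (n+1) ≤ M n := by
    intro n
    have h1 := step n p (hf (n+1))
    have e1 : (p:ℝ)*t*(a (n+1)) ≤ (p:ℝ)*t*(M n) :=
      mul_le_mul_of_nonneg_left (hMa1 n) (by positivity)
    have e2 : (q:ℝ)*t^2*(a n) ≤ (q:ℝ)*t^2*(M n) :=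
      mul_le_mul_of_nonneg_left (hMa2 n) (by positivity)
    have e3 : (p:ℝ)*t*(M n) + (q:ℝ)*t^2*(M n) = M n := by
      linear_combination (M n) * hpt
    have h2 : a (n+2) ≤ M n := by linarith
    exact max_le h2 (hMa1 n)
  have hanti : Antitone M := antitone_nat_of_succ_le mono
  -- contraction constant
  set c : ℝ := min (δ*t) ((p:ℝ)*δ*t^2) with hcdef
  have hc0 : 0 < c := lt_min (by positivity) (by positivity)
  have hcdt : c ≤ δ*t := min_le_left _ _
  have hcpt : c ≤ (p:ℝ)*δ*t^2 := min_le_right _ _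
  have hc1 : c < 1 := lt_of_le_of_lt hcdt (by nlinarith)
  -- contraction step
  have contr : ∀ m : ℕ, ‖f (m+1)‖ ≤ (p:ℝ) - δ → M (m+2) ≤ (1-c) * M m := by
    intro m hfm
    have h1 : a (m+2) ≤ (1 - δ*t) * M m := by
      have hs := step m ((p:ℝ)-δ) hfm
      have e1 : ((p:ℝ)-δ)*t*(a (m+1)) ≤ ((p:ℝ)-δ)*t*(M m) :=
        mul_le_mul_of_nonneg_left (hMa1 m) (by nlinarith)
      have e2 : (q:ℝ)*t^2*(a m) ≤ (q:ℝ)*t^2*(M m) :=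
        mul_le_mul_of_nonneg_left (hMa2 m) (by positivity)
      have e3 : ((p:ℝ)-δ)*t*(M m) + (q:ℝ)*t^2*(M m) = (1 - δ*t) * M m := by
        linear_combination (M m) * hpt
      linarith
    have h2 : a (m+3) ≤ (1 - (p:ℝ)*δ*t^2) * M m := by
      have hs : a (m+3) ≤ (p:ℝ)*t*(a (m+2)) + (q:ℝ)*t^2*(a (m+1)) :=
        step (m+1) p (hf (m+2))
      have e2 : (q:ℝ)*t^2*(a (m+1)) ≤ (q:ℝ)*t^2*(M m) :=
        mul_le_mul_of_nonneg_left (hMa1 m) (by positivity)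
      have e1 : (p:ℝ)*t*(a (m+2)) ≤ (p:ℝ)*t*((1 - δ*t)*M m) :=
        mul_le_mul_of_nonneg_left h1 (by positivity)
      have e3 : (p:ℝ)*t*((1 - δ*t)*M m) + (q:ℝ)*t^2*(M m) = (1 - (p:ℝ)*δ*t^2) * M m := by
        linear_combination (M m) * hpt
      linarith
    have hMm := hM0 m
    have b1 : a (m+3) ≤ (1-c) * M m :=
      le_trans h2 (mul_le_mul_of_nonneg_right (by linarith) hMm)
    have b2 : a (m+2) ≤ (1-c) * M m :=
      le_trans h1 (mul_le_mul_of_nonneg_right (by linarith) hMm)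
    exact max_le b1 b2
  -- extract the eventual window property
  rw [Filter.eventually_atTop] at hwin
  obtain ⟨N, hN⟩ := hwin
  set B : ℕ := max N (r+1) with hBdef
  have hNB : N ≤ B := le_max_left _ _
  have hrB : r + 1 ≤ B := le_max_right _ _
  set e : ℕ := B - (r+1) with hedef
  have heB : e + (r+1) = B := Nat.sub_add_cancel hrB
  set u : ℕ → ℝ := fun k => M (e + r + k*(r+2)) with hudef
  have key : ∀ k, u (k+1) ≤ (1-c) * u k := by
    intro k
    have hm2 : (k+1)*(r+2) = k*(r+2) + (r+2) := by ring
    have hnN : N ≤ e + 2*r + 1 + k*(r+2) := by omega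
    obtain ⟨j, hj, hfj⟩ := hN (e + 2*r + 1 + k*(r+2)) hnN
    rw [Finset.mem_Icc] at hj
    have hj1 : e + r + 1 + k*(r+2) ≤ j := by omega
    have hj2 : j ≤ e + 2*r + 1 + k*(r+2) := hj.2
    set m : ℕ := j - 1 with hmdef
    have hm : m + 1 = j := by omega
    have hfm : ‖f (m+1)‖ ≤ (p:ℝ) - δ := by rw [hm]; exact hfj
    have hcon := contr m hfm
    have i1 : m + 2 ≤ e + r + (k+1)*(r+2) := by omega
    have i2 : e + r + k*(r+2) ≤ m := by omega
    calc u (k+1) = M (e + r + (k+1)*(r+2)) := rfl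
      _ ≤ M (m+2) := hanti i1
      _ ≤ (1-c) * M m := hcon
      _ ≤ (1-c) * M (e + r + k*(r+2)) :=
          mul_le_mul_of_nonneg_left (hanti i2) (by linarith)
      _ = (1-c) * u k := rfl
  have geo : ∀ k, u k ≤ (1-c)^k * u 0 := by
    intro k
    induction k with
    | zero => simp
    | succ k ih =>
      calc u (k+1) ≤ (1-c) * u k := key k
        _ ≤ (1-c) * ((1-c)^k * u 0) := mul_le_mul_of_nonneg_left ih (by linarith)
        _ = (1-c)^(k+1) * u 0 := by ring
  have hgeo0 : Filter.Tendsto (fun k : ℕ => (1-c)^k * u 0) Filter.atTop (nhds 0) := by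
    have h1 : Filter.Tendsto (fun k : ℕ => (1-c)^k) Filter.atTop (nhds 0) :=
      tendsto_pow_atTop_nhds_zero_of_lt_one (by linarith) (by linarith)
    simpa using h1.mul_const (u 0)
  have hu0 : Filter.Tendsto u Filter.atTop (nhds 0) :=
    squeeze_zero (fun k => hM0 _) geo hgeo0
  -- M tends to 0
  have hMtend : Filter.Tendsto M Filter.atTop (nhds 0) := by
    rw [Metric.tendsto_atTop]
    intro ε hε
    obtain ⟨K, hK⟩ := (Metric.tendsto_atTop.mp hu0) ε hε
    refine ⟨e + r + K*(r+2), fun n hn => ?_⟩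
    have h1 : M n ≤ u K := hanti hn
    have h2 := hK K le_rfl
    rw [Real.dist_eq, sub_zero] at h2 ⊢
    rw [abs_of_nonneg (hM0 n)]
    calc M n ≤ u K := h1
      _ ≤ |u K| := le_abs_self _
      _ < ε := h2
  have hatend : Filter.Tendsto a Filter.atTop (nhds 0) :=
    squeeze_zero ha0 hMa2 hMtend
  have hfinal : (fun n : ℕ => ‖A n‖ ^ 2 / θ ^ (2 * n)) = fun n => (a n)^2 := by
    funext n
    simp only [hadef, htdef]
    rw [mul_pow, ← pow_mul, inv_pow, Nat.mul_comm n 2, div_eq_mul_inv]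
  rw [hfinal]
  simpa [pow_two] using hatend.mul hatend
end

section
/- Let p, q be integers with p ≥ q ≥ 1 and θ = (p + √(p² + 4q))/2. Let (A_n), (f_n), (g_n) be sequences of complex numbers satisfying A_{n+1} = f_n·A_n + g_{n−1}·A_{n−1} for all n ≥ 1, with |f_n| ≤ p and |g_n| ≤ q for all n. Suppose there exist δ' ∈ (0,1) and r ∈ ℕ such that for every sufficiently large n there is at least one j ∈ {n−r, …, n} with |f_j| ≤ p − δ'. Then there exist a constant c > 0 and n₀ ∈ ℕ such that |A_n|²/θ^{2n} ≤ c/n for all n ≥ n₀. -/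
set_option maxHeartbeats 1000000

theorem stmt_11 (p q : ℤ) (hq : 1 ≤ q) (hpq : q ≤ p) (θ : ℝ)
    (hθ : θ = ((p : ℝ) + Real.sqrt ((p : ℝ) ^ 2 + 4 * (q : ℝ))) / 2)
    (A f g : ℕ → ℂ)
    (hA : ∀ n : ℕ, 1 ≤ n → A (n + 1) = f n * A n + g (n - 1) * A (n - 1))
    (hf : ∀ n : ℕ, ‖f n‖ ≤ (p : ℝ))
    (hg : ∀ n : ℕ, ‖g n‖ ≤ (q : ℝ))
    (hwin : ∃ δ' : ℝ, 0 < δ' ∧ δ' < 1 ∧ ∃ r : ℕ,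
      ∀ᶠ n : ℕ in Filter.atTop, ∃ j ∈ Finset.Icc (n - r) n,
        ‖f j‖ ≤ (p : ℝ) - δ') :
    ∃ c : ℝ, 0 < c ∧ ∃ n₀ : ℕ, ∀ n : ℕ, n₀ ≤ n →
      ‖A n‖ ^ 2 / θ ^ (2 * n) ≤ c / (n : ℝ) := by
  obtain ⟨δ, hδ0, hδ1, r, hwin⟩ := hwin
  rw [Filter.eventually_atTop] at hwin
  obtain ⟨N, hN⟩ := hwin
  have hp1 : (1:ℝ) ≤ (p:ℝ) := by exact_mod_cast hq.trans hpq
  have hq1 : (1:ℝ) ≤ (q:ℝ) := by exact_mod_cast hq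
  have hs0 : (0:ℝ) ≤ (p:ℝ)^2 + 4*(q:ℝ) := by nlinarith
  have hsq : Real.sqrt ((p:ℝ)^2 + 4*(q:ℝ)) ^ 2 = (p:ℝ)^2 + 4*(q:ℝ) := Real.sq_sqrt hs0
  have hsn : (0:ℝ) ≤ Real.sqrt ((p:ℝ)^2 + 4*(q:ℝ)) := Real.sqrt_nonneg _
  have hsp : (p:ℝ) < Real.sqrt ((p:ℝ)^2 + 4*(q:ℝ)) := by nlinarith
  have hθp : (p:ℝ) < θ := by rw [hθ]; linarith
  have hθ1 : (1:ℝ) < θ := lt_of_le_of_lt hp1 hθp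
  have hθ0 : (0:ℝ) < θ := by linarith
  have hθne : θ ≠ 0 := ne_of_gt hθ0
  have hθsq : θ^2 = (p:ℝ)*θ + (q:ℝ) := by rw [hθ]; nlinarith [hsq]
  set B : ℕ → ℝ := fun n => ‖A n‖ / θ ^ n with hB
  have hB0 : ∀ n, 0 ≤ B n := fun n => div_nonneg (norm_nonneg _) (by positivity)
  -- key recursion
  have hrec : ∀ (c : ℝ) (m : ℕ), ‖f (m+1)‖ ≤ c →
      B (m+2) ≤ (c/θ) * B (m+1) + ((q:ℝ)/θ^2) * B m := by
    intro c m hc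
    have hA' := hA (m+1) (by omega)
    simp only [Nat.add_sub_cancel] at hA'
    have habs : ‖A (m+2)‖ ≤ c * ‖A (m+1)‖ + (q:ℝ) * ‖A m‖ := by
      calc ‖A (m+2)‖ = ‖f (m+1) * A (m+1) + g m * A m‖ := by
            rw [show m + 2 = m + 1 + 1 from rfl, hA']
      _ ≤ ‖f (m+1) * A (m+1)‖ + ‖g m * A m‖ := norm_add_le _ _
      _ = ‖f (m+1)‖ * ‖A (m+1)‖
            + ‖g m‖ * ‖A m‖ := by rw [norm_mul, norm_mul]
      _ ≤ c * ‖A (m+1)‖ + (q:ℝ) * ‖A m‖ := by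
            gcongr <;> first | exact hc | exact hg m
    have key : (c/θ) * B (m+1) + ((q:ℝ)/θ^2) * B m
        = (c * ‖A (m+1)‖ + (q:ℝ) * ‖A m‖) / θ^(m+2) := by
      simp only [hB]
      rw [pow_add θ m 2, pow_add θ m 1]
      field_simp
    rw [show B (m+2) = ‖A (m+2)‖ / θ^(m+2) from rfl, key]
    gcongr
  set M : ℕ → ℝ := fun n => max (B n) (B (n+1)) with hM
  have hM0 : ∀ n, 0 ≤ M n := fun n => le_trans (hB0 n) (le_max_left _ _)
  have hpθq : (p:ℝ)/θ + (q:ℝ)/θ^2 = 1 := by field_simp; nlinarith [hθsq]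
  have hpθ0 : (0:ℝ) ≤ (p:ℝ)/θ := by positivity
  have hqθ0 : (0:ℝ) ≤ (q:ℝ)/θ^2 := by positivity
  have mono : ∀ n, M (n+1) ≤ M n := by
    intro n
    have h2 : B (n+2) ≤ M n := by
      calc B (n+2) ≤ ((p:ℝ)/θ) * B (n+1) + ((q:ℝ)/θ^2) * B n := hrec _ n (hf (n+1))
      _ ≤ ((p:ℝ)/θ) * M n + ((q:ℝ)/θ^2) * M n := by
          gcongr
          · exact le_max_right _ _
          · exact le_max_left _ _
      _ = ((p:ℝ)/θ + (q:ℝ)/θ^2) * M n := by ring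
      _ = M n := by rw [hpθq, one_mul]
    exact max_le (le_max_right _ _) h2
  have hanti : Antitone M := antitone_nat_of_succ_le mono
  set lam : ℝ := 1 - (p:ℝ)*δ/θ^2 with hlam
  have hθ2 : (0:ℝ) < θ^2 := by positivity
  have hlam0 : 0 < lam := by
    rw [hlam]
    have h1 : (p:ℝ)*δ < θ^2 := by nlinarith
    rw [sub_pos, div_lt_one hθ2]
    exact h1
  have hlam1 : lam < 1 := by
    rw [hlam]
    have : 0 < (p:ℝ)*δ/θ^2 := by positivity
    linarith
  have good : ∀ m, ‖f (m+1)‖ ≤ (p:ℝ) - δ → M (m+2) ≤ lam * M m := by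
    intro m hfm
    have hid1 : ((p:ℝ)-δ)/θ + (q:ℝ)/θ^2 = 1 - δ/θ := by
      rw [sub_div]; linarith [hpθq]
    have hid2 : ((p:ℝ)/θ) * (1 - δ/θ) + (q:ℝ)/θ^2 = lam := by
      rw [hlam]
      have e : (p:ℝ)/θ * (1 - δ/θ) = (p:ℝ)/θ - (p:ℝ)*δ/θ^2 := by
        field_simp
      rw [e]; linarith [hpθq]
    have hpδ0 : (0:ℝ) ≤ ((p:ℝ)-δ)/θ := by
      apply div_nonneg _ hθ0.le; linarith
    have h1 : B (m+2) ≤ (1 - δ/θ) * M m := by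
      calc B (m+2) ≤ (((p:ℝ)-δ)/θ) * B (m+1) + ((q:ℝ)/θ^2) * B m := hrec _ m hfm
      _ ≤ (((p:ℝ)-δ)/θ) * M m + ((q:ℝ)/θ^2) * M m := by
          gcongr
          · exact le_max_right _ _
          · exact le_max_left _ _
      _ = (((p:ℝ)-δ)/θ + (q:ℝ)/θ^2) * M m := by ring
      _ = (1 - δ/θ) * M m := by rw [hid1]
    have h2 : B (m+3) ≤ lam * M m := by
      calc B (m+3) ≤ ((p:ℝ)/θ) * B (m+2) + ((q:ℝ)/θ^2) * B (m+1) := hrec _ (m+1) (hf (m+2))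
      _ ≤ ((p:ℝ)/θ) * ((1 - δ/θ) * M m) + ((q:ℝ)/θ^2) * M m := by
          gcongr
          exact le_max_right _ _
      _ = (((p:ℝ)/θ) * (1 - δ/θ) + (q:ℝ)/θ^2) * M m := by ring
      _ = lam * M m := by rw [hid2]
    have h1' : B (m+2) ≤ lam * M m := by
      have hcmp : 1 - δ/θ ≤ lam := by
        rw [hlam]
        have : (p:ℝ)*δ/θ^2 ≤ δ/θ := by
          rw [div_le_div_iff₀ hθ2 hθ0]
          nlinarith
        linarith
      calc B (m+2) ≤ (1 - δ/θ) * M m := h1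
      _ ≤ lam * M m := mul_le_mul_of_nonneg_right hcmp (hM0 m)
    exact max_le h1' h2
  set s : ℕ := r + 2 with hs
  set N₁ : ℕ := max N (r+1) with hN₁
  have window : ∀ m, N₁ ≤ m → M (m + s) ≤ lam * M m := by
    intro m hm
    have hmN : N ≤ m := le_trans (le_max_left _ _) hm
    have hmr : r + 1 ≤ m := le_trans (le_max_right _ _) hm
    obtain ⟨j, hj, hjf⟩ := hN (m + r + 1) (by omega)
    rw [Finset.mem_Icc] at hj
    obtain ⟨hj1, hj2⟩ := hj
    have hjl : m + 1 ≤ j := by omega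
    obtain ⟨m', rfl⟩ : ∃ m', j = m' + 1 := ⟨j - 1, by omega⟩
    have hg' := good m' hjf
    calc M (m + s) ≤ M (m' + 2) := hanti (by omega)
    _ ≤ lam * M m' := hg'
    _ ≤ lam * M m := mul_le_mul_of_nonneg_left (hanti (by omega)) hlam0.le
  have geo : ∀ k, M (N₁ + s * k) ≤ lam ^ k * M N₁ := by
    intro k
    induction k with
    | zero => simp
    | succ k ih =>
      have e : N₁ + s * (k+1) = (N₁ + s * k) + s := by ring
      calc M (N₁ + s * (k+1)) = M ((N₁ + s * k) + s) := by rw [e]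
      _ ≤ lam * M (N₁ + s * k) := window _ (by omega)
      _ ≤ lam * (lam ^ k * M N₁) := mul_le_mul_of_nonneg_left ih hlam0.le
      _ = lam ^ (k+1) * M N₁ := by ring
  set ε : ℝ := 1/lam - 1 with hε
  have hε0 : 0 < ε := by
    rw [hε]
    have : 1 < 1/lam := one_lt_one_div hlam0 hlam1
    linarith
  have hεlam : (1+ε) * lam = 1 := by rw [hε]; field_simp; ring
  have pow_bound : ∀ k : ℕ, 1 ≤ k → lam ^ k ≤ 1/((k:ℝ)*ε) := by
    intro k hk
    have hk0 : (0:ℝ) < (k:ℝ) := by exact_mod_cast hk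
    have h1 : 1 + (k:ℝ)*ε ≤ (1+ε)^k := one_add_mul_le_pow (by linarith) k
    have h3 : lam^k * (1+ε)^k = 1 := by
      rw [← mul_pow, mul_comm, hεlam, one_pow]
    rw [le_div_iff₀ (by positivity)]
    calc lam^k * ((k:ℝ)*ε) ≤ lam^k * (1 + (k:ℝ)*ε) := by
          apply mul_le_mul_of_nonneg_left _ (pow_nonneg hlam0.le k)
          linarith
    _ ≤ lam^k * (1+ε)^k := mul_le_mul_of_nonneg_left h1 (pow_nonneg hlam0.le k)
    _ = 1 := h3
  refine ⟨4*(s:ℝ)*(M N₁)^2/ε + 1, ?_, max (2*(N₁ + s)) (4*s), ?_⟩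
  · have : (0:ℝ) ≤ 4*(s:ℝ)*(M N₁)^2/ε := by
      apply div_nonneg _ hε0.le
      positivity
    linarith
  intro n hn
  have hn1 : 4*s ≤ n := le_trans (le_max_right _ _) hn
  have hn2 : 2*(N₁+s) ≤ n := le_trans (le_max_left _ _) hn
  have hs0' : 0 < s := by omega
  have hnn : 0 < n := by omega
  have hnR : (0:ℝ) < (n:ℝ) := by exact_mod_cast hnn
  set K : ℕ := (n - N₁)/s with hK
  set k' : ℕ := n/(2*s) with hk'
  have hk'le : k' ≤ K := by
    rw [hk', hK]
    have e : n/(2*s) = n/2/s := by rw [Nat.div_div_eq_div_mul]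
    rw [e]
    apply Nat.div_le_div_right
    omega
  have hk'1 : 1 ≤ k' := by
    rw [hk']
    apply Nat.one_le_div_iff (by omega) |>.mpr
    omega
  have hMn : M n ≤ lam ^ K * M N₁ := by
    have h0 : K * s ≤ n - N₁ := by rw [hK]; exact Nat.div_mul_le_self _ _
    have hN₁n : N₁ ≤ n := by omega
    have h1 : N₁ + s * K ≤ n := by
      calc N₁ + s * K = N₁ + K * s := by rw [Nat.mul_comm]
      _ ≤ N₁ + (n - N₁) := Nat.add_le_add_left h0 _
      _ = n := Nat.add_sub_cancel' hN₁n
    calc M n ≤ M (N₁ + s * K) := hanti h1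
    _ ≤ lam ^ K * M N₁ := geo K
  have hBn : B n ≤ lam ^ K * M N₁ := le_trans (le_max_left _ _) hMn
  have hBn2 : B n ^ 2 ≤ lam ^ k' * (M N₁)^2 := by
    have h1 : B n ^ 2 ≤ (lam ^ K * M N₁)^2 := by
      apply pow_le_pow_left₀ (hB0 n) hBn
    have h2 : (lam ^ K * M N₁)^2 = lam ^ (2*K) * (M N₁)^2 := by
      rw [mul_pow, ← pow_mul]; ring_nf
    have h3 : lam ^ (2*K) ≤ lam ^ k' := by
      apply pow_le_pow_of_le_one hlam0.le hlam1.le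
      omega
    calc B n ^ 2 ≤ lam ^ (2*K) * (M N₁)^2 := by rw [← h2]; exact h1
    _ ≤ lam ^ k' * (M N₁)^2 := mul_le_mul_of_nonneg_right h3 (by positivity)
  -- k' > n/(4s) as reals
  have hk'lb : (n:ℝ) / (4*(s:ℝ)) ≤ (k':ℝ) := by
    have hmod := Nat.div_add_mod n (2*s)
    have hmodlt : n % (2*s) < 2*s := Nat.mod_lt _ (by omega)
    have h1 : n < 2*s*k' + 2*s := by
      rw [hk']
      calc n = 2*s*(n/(2*s)) + n % (2*s) := (Nat.div_add_mod n (2*s)).symm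
      _ < 2*s*(n/(2*s)) + 2*s := Nat.add_lt_add_left hmodlt _
    have h2 : (n:ℝ) < 2*(s:ℝ)*(k':ℝ) + 2*(s:ℝ) := by exact_mod_cast h1
    have hsR : (0:ℝ) < (s:ℝ) := by exact_mod_cast hs0'
    have h4 : 4*(s:ℝ) ≤ (n:ℝ) := by exact_mod_cast hn1
    rw [div_le_iff₀ (by positivity)]
    nlinarith
  have hfin : lam ^ k' ≤ 4*(s:ℝ)/((n:ℝ)*ε) := by
    have h1 : lam ^ k' ≤ 1/((k':ℝ)*ε) := pow_bound k' hk'1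
    have hk'R : (0:ℝ) < (k':ℝ) := by exact_mod_cast hk'1
    have hsR : (0:ℝ) < (s:ℝ) := by exact_mod_cast hs0'
    have h2 : 1/((k':ℝ)*ε) ≤ 4*(s:ℝ)/((n:ℝ)*ε) := by
      rw [div_le_div_iff₀ (by positivity) (by positivity)]
      have : (n:ℝ) ≤ 4*(s:ℝ)*(k':ℝ) := by
        have := hk'lb
        rw [div_le_iff₀ (by positivity)] at this
        linarith
      nlinarith
    linarith
  have hgoal : ‖A n‖ ^ 2 / θ ^ (2*n) = B n ^ 2 := by
    rw [hB]
    simp only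
    rw [div_pow, ← pow_mul, Nat.mul_comm n 2]
  rw [hgoal]
  calc B n ^ 2 ≤ lam ^ k' * (M N₁)^2 := hBn2
  _ ≤ (4*(s:ℝ)/((n:ℝ)*ε)) * (M N₁)^2 := mul_le_mul_of_nonneg_right hfin (by positivity)
  _ = (4*(s:ℝ)*(M N₁)^2/ε) / (n:ℝ) := by
      rw [div_div, div_mul_eq_mul_div, mul_comm ε (n:ℝ)]
  _ ≤ (4*(s:ℝ)*(M N₁)^2/ε + 1) / (n:ℝ) := by
      gcongr
      linarith
end

section
/- Let m ∈ ℕ with m ≥ 1 and λ_m = (m + √(m² + 4))/2. Let k be a real number with k ∈ ℚ(λ_m) but k ∉ (1/√(m² + 4))·ℤ[λ_m], i.e. k = a + b·λ_m for some rationals a, b, but there are no integers c, d with k = (c + d·λ_m)/√(m² + 4). Then there exist δ ∈ (0,1) and r ∈ ℕ such that for all n ∈ ℕ: if ‖k·λ_mⁿ‖ < δ, then ‖k·λ_m^j‖ ≥ δ for at least one j ∈ {n+1, …, n+r}. -/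
set_option maxHeartbeats 1000000

def abRec (m : ℕ) (p : ℤ × ℤ) : ℕ → ℤ × ℤ
  | 0 => p
  | n+1 => ((abRec m p n).2, (abRec m p n).1 + m * (abRec m p n).2)

lemma abRec_spec (m : ℕ) (p : ℤ × ℤ) (x : ℝ) (hx : x ^ 2 = m * x + 1) (n : ℕ) :
    ((abRec m p n).1 : ℝ) + ((abRec m p n).2 : ℝ) * x = ((p.1 : ℝ) + (p.2 : ℝ) * x) * x ^ n := by
  induction n with
  | zero => simp [abRec]
  | succ n ih =>
    show ((abRec m p n).2 : ℝ) + (((abRec m p n).1 + m * (abRec m p n).2 : ℤ) : ℝ) * x = _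
    rw [pow_succ, ← mul_assoc, ← ih]
    push_cast
    linear_combination (-(abRec m p n).2 : ℝ) * hx

lemma sqrt_irr (m : ℕ) (hm : 1 ≤ m) : Irrational (Real.sqrt ((m : ℝ) ^ 2 + 4)) := by
  have hD : ((m : ℝ) ^ 2 + 4) = ((m ^ 2 + 4 : ℤ) : ℝ) := by push_cast; ring
  have hDpos : (0:ℝ) ≤ (m : ℝ) ^ 2 + 4 := by positivity
  have hs2 : (Real.sqrt ((m : ℝ) ^ 2 + 4)) ^ 2 = ((m ^ 2 + 4 : ℤ) : ℝ) := by
    rw [Real.sq_sqrt hDpos, hD]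
  refine irrational_nrt_of_notint_nrt 2 (m ^ 2 + 4) hs2 ?_ (by norm_num)
  rintro ⟨y, hy⟩
  have hmlt : (m : ℝ) < Real.sqrt ((m : ℝ) ^ 2 + 4) := by
    have : ((m:ℝ))^2 < (m : ℝ) ^ 2 + 4 := by norm_num
    nlinarith [Real.sq_sqrt hDpos, Real.sqrt_nonneg ((m : ℝ) ^ 2 + 4), (by positivity : (0:ℝ) ≤ (m:ℝ))]
  have hlt2 : Real.sqrt ((m : ℝ) ^ 2 + 4) < (m : ℝ) + 2 := by
    nlinarith [Real.sq_sqrt hDpos, Real.sqrt_nonneg ((m : ℝ) ^ 2 + 4), (by positivity : (0:ℝ) ≤ (m:ℝ)), (by exact_mod_cast hm : (1:ℝ) ≤ (m:ℝ))]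
  rw [hy] at hmlt hlt2 hs2
  have h1 : (m : ℤ) < y := by exact_mod_cast hmlt
  have h2 : y < (m : ℤ) + 2 := by exact_mod_cast hlt2
  have h3 : y ^ 2 = (m:ℤ) ^ 2 + 4 := by exact_mod_cast hs2
  have : y = (m : ℤ) + 1 := by omega
  subst this
  ring_nf at h3
  omega

noncomputable def distNearestInt (x : ℝ) : ℝ := |x - round x|

theorem stmt_13 (m : ℕ) (hm : 1 ≤ m) (lam : ℝ)
    (hlam : lam = ((m : ℝ) + Real.sqrt ((m : ℝ) ^ 2 + 4)) / 2)
    (k : ℝ)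
    (hk1 : ∃ a b : ℚ, k = (a : ℝ) + (b : ℝ) * lam)
    (hk2 : ¬ ∃ c d : ℤ, k = ((c : ℝ) + (d : ℝ) * lam) / Real.sqrt ((m : ℝ) ^ 2 + 4)) :
    ∃ δ : ℝ, 0 < δ ∧ δ < 1 ∧ ∃ r : ℕ, 0 < r ∧
      ∀ n : ℕ, distNearestInt (k * lam ^ n) < δ →
        ∃ j ∈ Finset.Icc (n + 1) (n + r), δ ≤ distNearestInt (k * lam ^ j) := by
  obtain ⟨a, b, hk⟩ := hk1
  set s : ℝ := Real.sqrt ((m : ℝ) ^ 2 + 4) with hs_def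
  have hDpos : (0:ℝ) ≤ (m : ℝ) ^ 2 + 4 := by positivity
  have hs2 : s ^ 2 = (m : ℝ) ^ 2 + 4 := Real.sq_sqrt hDpos
  have hm1 : (1:ℝ) ≤ (m:ℝ) := by exact_mod_cast hm
  have hms : (m : ℝ) < s := by
    nlinarith [Real.sqrt_nonneg ((m : ℝ) ^ 2 + 4)]
  have hs_lt : s < (m:ℝ) + 2 := by
    nlinarith [Real.sqrt_nonneg ((m : ℝ) ^ 2 + 4)]
  have hs_pos : 0 < s := by linarith
  have hs_ne : s ≠ 0 := ne_of_gt hs_pos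
  have hlam2 : lam ^ 2 = (m:ℝ) * lam + 1 := by rw [hlam]; nlinarith [hs2]
  have hlam_gt : 1 < lam := by rw [hlam]; linarith
  obtain ⟨lam', hlam'_def⟩ : ∃ x : ℝ, x = ((m:ℝ) - s) / 2 := ⟨_, rfl⟩
  have hlam'2 : lam' ^ 2 = (m:ℝ) * lam' + 1 := by rw [hlam'_def]; nlinarith [hs2]
  have hlam'_neg : -1 < lam' := by rw [hlam'_def]; linarith
  have hlam'_lt : lam' < 0 := by rw [hlam'_def]; linarith
  have hlam'_abs : |lam'| ≤ 1 := by rw [abs_le]; constructor <;> linarith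
  have hsum : lam + lam' = (m:ℝ) := by rw [hlam, hlam'_def]; ring
  have hdiff : lam - lam' = s := by rw [hlam, hlam'_def]; ring
  have hirr_s : Irrational s := sqrt_irr m hm
  -- linear independence over ℤ
  have hlin : ∀ (x : ℝ), Irrational x → ∀ e f : ℤ, (e:ℝ) + (f:ℝ) * x = 0 → e = 0 ∧ f = 0 := by
    intro x hx e f hef
    rcases eq_or_ne f 0 with hf | hf
    · subst hf; simp at hef; exact ⟨by exact_mod_cast hef, rfl⟩
    · exfalso
      apply hx
      refine ⟨(-e : ℚ) / (f : ℚ), ?_⟩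
      have hfne : ((f:ℚ):ℝ) ≠ 0 := by exact_mod_cast hf
      push_cast
      field_simp
      linarith [hef]
  have hirr_lam : Irrational lam := by
    rw [hlam]
    have h1 : Irrational ((m:ℝ) + s) := hirr_s.natCast_add m
    exact h1.div_natCast (by norm_num)
  have hirr_lam' : Irrational lam' := by
    rw [hlam'_def]
    have h1 : Irrational ((m:ℝ) - s) := by
      have := hirr_s.neg.natCast_add m
      simpa [sub_eq_add_neg] using this
    exact h1.div_natCast (by norm_num)
  -- step A: k * lam ^ n is never in the Fourier module
  have stepA : ∀ n : ℕ, ∀ c d : ℤ, k * lam ^ n ≠ ((c:ℝ) + (d:ℝ) * lam) / s := by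
    intro n
    induction n with
    | zero =>
      intro c d hcd
      exact hk2 ⟨c, d, by simpa using hcd⟩
    | succ n ih =>
      intro c d hcd
      apply ih (d - c * m) c
      have h1 : k * lam ^ n = k * lam ^ (n+1) * (lam - m) := by
        have : lam * (lam - m) = 1 := by linear_combination hlam2
        calc k * lam ^ n = k * lam ^ n * (lam * (lam - m)) := by rw [this]; ring
          _ = k * lam ^ (n+1) * (lam - m) := by ring
      rw [h1, hcd]
      push_cast
      field_simp
      linear_combination ((d:ℝ)) * hlam2
  -- rational data
  set Q : ℤ := (a.den : ℤ) * (b.den : ℤ) with hQ_def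
  have hQpos : 0 < Q := by positivity
  have hQR : (0:ℝ) < (Q:ℝ) := by exact_mod_cast hQpos
  have ha0 : (a.num : ℚ) = a * a.den := by
    rw [mul_comm]; exact_mod_cast (Rat.den_mul_eq_num a).symm
  have hb0 : (b.num : ℚ) = b * b.den := by
    rw [mul_comm]; exact_mod_cast (Rat.den_mul_eq_num b).symm
  set A : ℤ := a.num * (b.den : ℤ) with hA_def
  set B : ℤ := b.num * (a.den : ℤ) with hB_def
  have haR : ((a.num : ℝ)) = (a:ℝ) * (a.den : ℝ) := by exact_mod_cast congrArg (Rat.cast (K := ℝ)) ha0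
  have hbR : ((b.num : ℝ)) = (b:ℝ) * (b.den : ℝ) := by exact_mod_cast congrArg (Rat.cast (K := ℝ)) hb0
  have hABk : (A:ℝ) + (B:ℝ) * lam = (Q:ℝ) * k := by
    rw [hk, hQ_def, hA_def, hB_def]
    push_cast
    rw [haR, hbR]; ring
  set P : ℕ → ℤ × ℤ := abRec m (A, B) with hP_def
  have hP : ∀ n : ℕ, ((P n).1 : ℝ) + ((P n).2 : ℝ) * lam = (Q:ℝ) * k * lam ^ n := by
    intro n
    have h := abRec_spec m (A, B) lam hlam2 n
    rw [show ((A,B).1 : ℤ) = A from rfl, show ((A,B).2 : ℤ) = B from rfl, hABk] at h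
    exact h
  have hP' : ∀ n : ℕ, ((P n).1 : ℝ) + ((P n).2 : ℝ) * lam' = ((A:ℝ) + (B:ℝ) * lam') * lam' ^ n := by
    intro n
    exact abRec_spec m (A, B) lam' hlam'2 n
  -- constants
  set Kc : ℝ := |(A:ℝ)| + |(B:ℝ)| with hKc_def
  have hKc_nonneg : 0 ≤ Kc := by positivity
  set C₁ : ℝ := s * Kc + (Q:ℝ) * (lam + 1) with hC1_def
  have hC1_pos : 0 < C₁ := by
    have h1 : 0 < (Q:ℝ) * (lam + 1) := by positivity
    have h2 : 0 ≤ s * Kc := by positivity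
    rw [hC1_def]; linarith
  set c₀ : ℝ := 1 / (s * (Q:ℝ) * C₁) with hc0_def
  have hc0_pos : 0 < c₀ := by rw [hc0_def]; positivity
  -- choose r
  obtain ⟨r₀, hr₀⟩ := pow_unbounded_of_one_lt ((1 + (lam + 1)/s) / c₀) hlam_gt
  set r : ℕ := r₀ + 1 with hr_def
  have hr_pos : 0 < r := Nat.succ_pos _
  have hr_big : (1 + (lam + 1)/s) < c₀ * lam ^ r := by
    have h1 : lam ^ r₀ < lam ^ r := by
      apply pow_lt_pow_right₀ hlam_gt (by omega)
    have h2 : (1 + (lam + 1)/s) / c₀ < lam ^ r := lt_trans hr₀ h1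
    calc 1 + (lam + 1)/s = c₀ * ((1 + (lam + 1)/s) / c₀) := by
          rw [mul_comm, div_mul_cancel₀ _ (ne_of_gt hc0_pos)]
      _ < c₀ * lam ^ r := by apply mul_lt_mul_of_pos_left h2 hc0_pos
  -- choose δ
  refine ⟨1 / ((m:ℝ) + 3), by positivity, by rw [div_lt_one (by linarith)]; linarith, r, hr_pos, ?_⟩
  set δ : ℝ := 1 / ((m:ℝ) + 3) with hδ_def
  have hδ_pos : 0 < δ := by rw [hδ_def]; positivity
  have hδ_le : δ ≤ 1 := by rw [hδ_def, div_le_one (by linarith)]; linarith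
  intro n hn
  by_contra hcon
  push_neg at hcon
  -- all nearby powers are close to integers
  set N : ℕ → ℤ := fun t => round (k * lam ^ (n + t)) with hN_def
  have hN : ∀ t ≤ r, |k * lam ^ (n + t) - (N t : ℝ)| < δ := by
    intro t ht
    rcases Nat.eq_zero_or_pos t with h0 | hpos
    · subst h0; simpa [distNearestInt, hN_def] using hn
    · have hj : n + t ∈ Finset.Icc (n+1) (n+r) := by
        simp [Finset.mem_Icc]; omega
      simpa [distNearestInt] using hcon (n + t) hj
  -- recurrence for N
  have hpow : ∀ u : ℕ, k * lam ^ (u + 2) = (m:ℝ) * (k * lam ^ (u + 1)) + k * lam ^ u := by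
    intro u
    linear_combination (k * lam ^ u) * hlam2
  have hrec : ∀ t, t + 2 ≤ r → N (t + 2) = m * N (t + 1) + N t := by
    intro t ht
    have e2 := hN (t+2) ht
    have e1 := hN (t+1) (by omega)
    have e0 := hN t (by omega)
    have hz : |((N (t+2) - m * N (t+1) - N t : ℤ) : ℝ)| < 1 := by
      have hkey : ((N (t+2) - m * N (t+1) - N t : ℤ) : ℝ)
          = -((k * lam ^ (n + (t+2)) - N (t+2)) - (m:ℝ) * (k * lam ^ (n + (t+1)) - N (t+1))
            - (k * lam ^ (n + t) - N t)) := by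
        push_cast
        have := hpow (n + t)
        rw [show n + (t+2) = n + t + 2 by omega, show n + (t+1) = n + t + 1 by omega]
        linarith [this]
      have hmδ : ((m:ℝ) + 2) * δ < 1 := by
        rw [hδ_def, mul_one_div, div_lt_one (by linarith)]
        linarith
      have b0 := abs_lt.mp e0
      have b1 := abs_lt.mp e1
      have b2 := abs_lt.mp e2
      have hm0 : (0:ℝ) < (m:ℝ) := by linarith
      have hb1a : (m:ℝ) * (k * lam ^ (n + (t+1)) - (N (t+1):ℝ)) < (m:ℝ) * δ :=
        mul_lt_mul_of_pos_left b1.2 hm0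
      have hb1b : -((m:ℝ) * δ) < (m:ℝ) * (k * lam ^ (n + (t+1)) - (N (t+1):ℝ)) := by
        have := mul_lt_mul_of_pos_left b1.1 hm0
        linarith
      rw [hkey, abs_neg, abs_lt]
      constructor <;> linarith [hmδ, hδ_pos, b0.1, b0.2, b2.1, b2.2, hb1a, hb1b]
    have : (N (t+2) - m * N (t+1) - N t : ℤ) = 0 := by
      rw [← Int.abs_lt_one_iff]
      exact_mod_cast hz
    omega
  -- closed form for N
  obtain ⟨γ, hγ_def⟩ : ∃ x : ℝ, x = ((N 1 : ℝ) - lam' * (N 0 : ℝ)) / s := ⟨_, rfl⟩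
  obtain ⟨γ', hγ'_def⟩ : ∃ x : ℝ, x = (lam * (N 0 : ℝ) - (N 1 : ℝ)) / s := ⟨_, rfl⟩
  have hform : ∀ t, t + 1 ≤ r → ((N t : ℝ) = γ * lam ^ t + γ' * lam' ^ t ∧
      (N (t+1) : ℝ) = γ * lam ^ (t+1) + γ' * lam' ^ (t+1)) := by
    intro t
    induction t with
    | zero =>
      intro _
      constructor
      · rw [hγ_def, hγ'_def]
        field_simp
        linear_combination (-((N 0 : ℤ)) : ℝ) * hdiff
      · rw [hγ_def, hγ'_def]
        norm_num
        field_simp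
        linear_combination (-((N 1 : ℤ)) : ℝ) * hdiff
    | succ t ih =>
      intro ht
      obtain ⟨ih1, ih2⟩ := ih (by omega)
      refine ⟨ih2, ?_⟩
      have hc := hrec t (by omega)
      have hcR : ((N (t+2)) : ℝ) = (m:ℝ) * ((N (t+1)) : ℝ) + ((N t) : ℝ) := by
        rw [hc]; push_cast; ring
      show ((N (t+2)) : ℝ) = γ * lam ^ (t+2) + γ' * lam' ^ (t+2)
      rw [hcR, ih1, ih2]
      linear_combination (-(γ * lam ^ t)) * hlam2 + (-(γ' * lam' ^ t)) * hlam'2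
  have hNr : ((N r : ℝ)) = γ * lam ^ r + γ' * lam' ^ r := by
    obtain ⟨_, h2⟩ := hform (r - 1) (by omega)
    rwa [show r - 1 + 1 = r by omega] at h2
  -- bound on γ'
  have hε0 := hN 0 (by omega)
  have hε1 := hN 1 (by omega)
  have hNbound : |lam * ((N 0):ℝ) - ((N 1):ℝ)| ≤ lam + 1 := by
    have hid : lam * ((N 0):ℝ) - ((N 1):ℝ)
        = (k * lam ^ (n+1) - ((N 1):ℝ)) - lam * (k * lam ^ (n+0) - ((N 0):ℝ)) := by
      have hh : k * lam ^ (n+1) = lam * (k * lam ^ (n+0)) := by ring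
      linarith [hh]
    rw [hid]
    have hlp : (0:ℝ) < lam := by linarith
    calc |(k * lam ^ (n+1) - ((N 1):ℝ)) - lam * (k * lam ^ (n+0) - ((N 0):ℝ))|
        ≤ |k * lam ^ (n+1) - ((N 1):ℝ)| + |lam * (k * lam ^ (n+0) - ((N 0):ℝ))| := abs_sub _ _
      _ = |k * lam ^ (n+1) - ((N 1):ℝ)| + lam * |k * lam ^ (n+0) - ((N 0):ℝ)| := by
          rw [abs_mul, abs_of_pos hlp]
      _ ≤ lam + 1 := by
          have hh1 : |k * lam ^ (n+0) - ((N 0):ℝ)| ≤ 1 := le_trans hε0.le hδ_le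
          have hh2 : lam * |k * lam ^ (n+0) - ((N 0):ℝ)| ≤ lam * 1 :=
            mul_le_mul_of_nonneg_left hh1 hlp.le
          linarith [hε1, hδ_le]
  have hγ'_bound : |γ'| ≤ (lam + 1) / s := by
    rw [hγ'_def, abs_div, abs_of_pos hs_pos]
    gcongr
  -- α and integer vector (e, f)
  set α : ℝ := k * lam ^ n - γ with hα_def
  set e : ℤ := 2 * (P n).2 - m * (P n).1 - Q * (N 1 - m * N 0) with he_def
  set f : ℤ := 2 * (P n).1 + m * (P n).2 - Q * (N 0) with hf_def
  have hs_eq : s = 2 * lam - (m:ℝ) := by rw [hlam]; ring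
  have hlam'_eq : lam' = (m:ℝ) - lam := by linarith
  have hsγ : s * γ = ((N 1):ℝ) - lam' * ((N 0):ℝ) := by
    rw [hγ_def]; field_simp
  have hef : (e:ℝ) + (f:ℝ) * lam = s * (Q:ℝ) * α := by
    have h1 : s * (Q:ℝ) * α = s * ((Q:ℝ) * k * lam ^ n) - (Q:ℝ) * (s * γ) := by
      rw [hα_def]; ring
    rw [h1, ← hP n, hsγ, hs_eq, hlam'_eq, he_def, hf_def]
    push_cast
    linear_combination (-2*((P n).2:ℝ)) * hlam2
  have hid' : (e:ℝ) + (f:ℝ) * lam'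
      = -(s*(((P n).1:ℝ) + ((P n).2:ℝ)*lam')) + (Q:ℝ)*(lam*((N 0):ℝ) - ((N 1):ℝ)) := by
    rw [he_def, hf_def]
    push_cast
    rw [show s = (m:ℝ) - 2*lam' by rw [hlam'_def]; ring, show lam = (m:ℝ) - lam' by linarith]
    linear_combination (-2*((P n).2:ℝ)) * hlam'2
  have hPn'_bound : |((P n).1:ℝ) + ((P n).2:ℝ)*lam'| ≤ Kc := by
    rw [hP' n, abs_mul, hKc_def]
    have h1 : |(A:ℝ) + (B:ℝ)*lam'| ≤ |(A:ℝ)| + |(B:ℝ)| := by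
      calc |(A:ℝ) + (B:ℝ)*lam'| ≤ |(A:ℝ)| + |(B:ℝ)*lam'| := abs_add_le _ _
        _ ≤ |(A:ℝ)| + |(B:ℝ)| := by
            rw [abs_mul]
            have := mul_le_of_le_one_right (abs_nonneg (B:ℝ)) hlam'_abs
            linarith
    have h2 : |lam' ^ n| ≤ 1 := by
      rw [abs_pow]; exact pow_le_one₀ (abs_nonneg _) hlam'_abs
    calc |(A:ℝ) + (B:ℝ)*lam'| * |lam' ^ n| ≤ (|(A:ℝ)| + |(B:ℝ)|) * 1 :=
          mul_le_mul h1 h2 (abs_nonneg _) (by positivity)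
      _ = |(A:ℝ)| + |(B:ℝ)| := mul_one _
  have hef'_bound : |(e:ℝ) + (f:ℝ) * lam'| ≤ C₁ := by
    rw [hid', hC1_def]
    calc |-(s*(((P n).1:ℝ) + ((P n).2:ℝ)*lam')) + (Q:ℝ)*(lam*((N 0):ℝ) - ((N 1):ℝ))|
        ≤ |s*(((P n).1:ℝ) + ((P n).2:ℝ)*lam')| + |(Q:ℝ)*(lam*((N 0):ℝ) - ((N 1):ℝ))| := by
          have h := abs_add_le (-(s*(((P n).1:ℝ) + ((P n).2:ℝ)*lam'))) ((Q:ℝ)*(lam*((N 0):ℝ) - ((N 1):ℝ)))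
          simpa [abs_neg] using h
      _ ≤ s * Kc + (Q:ℝ) * (lam + 1) := by
          rw [abs_mul, abs_mul, abs_of_pos hs_pos, abs_of_pos hQR]
          exact add_le_add (mul_le_mul_of_nonneg_left hPn'_bound hs_pos.le)
            (mul_le_mul_of_nonneg_left hNbound hQR.le)
  -- (e, f) ≠ (0, 0)
  have hef_ne : ¬(e = 0 ∧ f = 0) := by
    rintro ⟨he0, hf0⟩
    have h : (0:ℝ) = s * (Q:ℝ) * α := by
      rw [← hef, he0, hf0]; push_cast; ring
    have hα0 : α = 0 := by
      rcases mul_eq_zero.mp h.symm with h' | h'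
      · exact absurd h' (by positivity)
      · exact h'
    apply stepA n (N 1 - m * N 0) (N 0)
    have hkg : k * lam ^ n = γ := by rw [hα_def] at hα0; linarith
    rw [hkg, hγ_def, hlam'_eq]
    push_cast
    ring
  -- norm is a nonzero integer
  have hprodll : lam * lam' = -1 := by
    rw [hlam, hlam'_def]
    linear_combination (-(1:ℝ)/4) * hs2
  have hprod_e : ((e:ℝ) + (f:ℝ)*lam) * ((e:ℝ) + (f:ℝ)*lam') = ((e^2 + m*e*f - f^2 : ℤ):ℝ) := by
    push_cast
    linear_combination ((e:ℝ)*(f:ℝ)) * hsum + ((f:ℝ)^2) * hprodll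
  have hz_ne : (e^2 + m*e*f - f^2 : ℤ) ≠ 0 := by
    intro hz0
    rw [hz0] at hprod_e
    push_cast at hprod_e
    rcases mul_eq_zero.mp hprod_e with h' | h'
    · exact hef_ne (hlin lam hirr_lam e f h')
    · exact hef_ne (hlin lam' hirr_lam' e f h')
  have hz1 : (1:ℝ) ≤ |(e:ℝ) + (f:ℝ)*lam| * |(e:ℝ) + (f:ℝ)*lam'| := by
    rw [← abs_mul, hprod_e]
    exact_mod_cast Int.one_le_abs hz_ne
  -- lower bound on |α|
  have hαlow : c₀ ≤ |α| := by
    have h1 : |(e:ℝ) + (f:ℝ)*lam| = s * (Q:ℝ) * |α| := by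
      rw [hef, abs_mul, abs_mul, abs_of_pos hs_pos, abs_of_pos hQR]
    have h2 : (1:ℝ) ≤ s * (Q:ℝ) * |α| * C₁ := by
      calc (1:ℝ) ≤ |(e:ℝ) + (f:ℝ)*lam| * |(e:ℝ) + (f:ℝ)*lam'| := hz1
        _ ≤ |(e:ℝ) + (f:ℝ)*lam| * C₁ :=
            mul_le_mul_of_nonneg_left hef'_bound (abs_nonneg _)
        _ = s * (Q:ℝ) * |α| * C₁ := by rw [h1]
    rw [hc0_def, div_le_iff₀ (by positivity)]
    linarith [h2]
  -- final contradiction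
  have hεr := hN r (le_refl r)
  have hεr_eq : k * lam ^ (n + r) - ((N r):ℝ) = α * lam ^ r - γ' * lam' ^ r := by
    rw [hNr, hα_def, pow_add]; ring
  have hlow1 : |α * lam ^ r| - |γ' * lam' ^ r| ≤ |k * lam ^ (n + r) - ((N r):ℝ)| := by
    rw [hεr_eq]
    exact abs_sub_abs_le_abs_sub _ _
  have hlam_pos : (0:ℝ) < lam := by linarith
  have h2' : c₀ * lam ^ r ≤ |α * lam ^ r| := by
    rw [abs_mul, abs_pow, abs_of_pos hlam_pos]
    exact mul_le_mul_of_nonneg_right hαlow (by positivity)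
  have h3' : |γ' * lam' ^ r| ≤ (lam + 1) / s := by
    rw [abs_mul]
    have hp : |lam' ^ r| ≤ 1 := by
      rw [abs_pow]; exact pow_le_one₀ (abs_nonneg _) hlam'_abs
    calc |γ'| * |lam' ^ r| ≤ |γ'| * 1 := mul_le_mul_of_nonneg_left hp (abs_nonneg _)
      _ = |γ'| := mul_one _
      _ ≤ (lam + 1) / s := hγ'_bound
  have : (1:ℝ) < |k * lam ^ (n + r) - ((N r):ℝ)| := by
    have := hr_big
    linarith
  linarith [hεr, hδ_le]
end
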